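/- arXiv:math/0211020 — 4 statements merged into one kernel-verified Lean document; each statement's English description precedes it below -/
import Mathlib

section
/- Let X_1, X_2, ..., X_n be (possibly dependent) {0,1}-valued random variables with p_i = E[X_i], and let S_n = X_1 + ... + X_n with E[S_n] = Σ_{i=1}^n p_i = λ. Then the relative entropy between the distribution P_{S_n} of S_n and the Poisson(λ) distribution satisfies D(P_{S_n} ‖ Po(λ)) ≤ Σ_{i=1}^n p_i² + [ Σ_{i=1}^n H(X_i) − H(X_1, X_2, ..., X_n) ]. -/
open MeasureTheory ProbabilityTheory Real Filter

/-- The distribution (probability mass function) of a random variable `X`,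
as a real-valued function: `distOf μ X a = μ(X = a)`. -/
noncomputable def distOf {Ω α : Type*} [MeasurableSpace Ω] (μ : Measure Ω) (X : Ω → α) (a : α) : ℝ :=
  (μ {ω | X ω = a}).toReal

/-- Relative entropy `D(P‖Q) = ∑ₓ P(x) log (P(x)/Q(x))` (natural logarithm). -/
noncomputable def relEnt {α : Type*} (P Q : α → ℝ) : ℝ :=
  ∑' x, P x * Real.log (P x / Q x)

/-- Shannon entropy `H(P) = -∑ₓ P(x) log P(x)` (natural logarithm). -/
noncomputable def entH {α : Type*} (P : α → ℝ) : ℝ :=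
  -∑' x, P x * Real.log (P x)

/-- The Poisson(l) probability mass function on ℕ. -/
noncomputable def poissonPMF (l : ℝ) (k : ℕ) : ℝ :=
  Real.exp (-l) * l ^ k / (Nat.factorial k)

/-- The scaled score function `ρ_X(x) = (x+1)P(x+1)/(λ P(x)) - 1`. -/
noncomputable def scaledScore (P : ℕ → ℝ) (l : ℝ) (x : ℕ) : ℝ :=
  ((x + 1 : ℕ) : ℝ) * P (x + 1) / (l * P x) - 1

/-- The scaled Fisher information `K(X) = λ E[ρ_X(X)²]`. -/
noncomputable def scaledFisher (P : ℕ → ℝ) (l : ℝ) : ℝ :=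
  l * ∑' x, P x * (scaledScore P l x) ^ 2

/-- Total variation distance `‖P - Q‖_TV = ∑ₓ |P(x) - Q(x)|`. -/
noncomputable def tvDist {α : Type*} (P Q : α → ℝ) : ℝ :=
  ∑' x, |P x - Q x|

section AuxForProp1

open Finset Real

private lemma aux_pow_binom (x y : ℝ) (hx : 0 ≤ x) (hy : 0 ≤ y) :
    ∀ k : ℕ, x ^ (k + 1) + (k + 1 : ℝ) * x ^ k * y ≤ (x + y) ^ (k + 1) := by
  intro k
  induction k with
  | zero => simp
  | succ k ih =>
      have h1 : (x + y) ^ (k + 1 + 1) = (x + y) * (x + y) ^ (k + 1) := by ring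
      have h2 : 0 ≤ x ^ k := pow_nonneg hx k
      have hxy : 0 ≤ x + y := by linarith
      have key := mul_le_mul_of_nonneg_left ih hxy
      have expand : (x + y) * (x ^ (k + 1) + ((k : ℝ) + 1) * x ^ k * y)
          = x ^ (k + 1 + 1) + ((k : ℝ) + 1 + 1) * x ^ (k + 1) * y + ((k : ℝ) + 1) * x ^ k * y ^ 2 := by
        ring
      have hnn : 0 ≤ ((k : ℝ) + 1) * x ^ k * y ^ 2 := by positivity
      push_cast
      rw [h1]
      rw [expand] at key
      linarith

private lemma aux_esymm {ι : Type*} [DecidableEq ι] (s : Finset ι) (p : ι → ℝ)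
    (hp : ∀ i ∈ s, 0 ≤ p i) :
    ∀ k : ℕ, (k.factorial : ℝ) * ∑ T ∈ s.powersetCard k, ∏ i ∈ T, p i ≤ (∑ i ∈ s, p i) ^ k := by
  classical
  induction s using Finset.induction_on with
  | empty =>
      intro k
      cases k with
      | zero => simp
      | succ k =>
          rw [Finset.powersetCard_eq_empty.2 (by simp)]
          simp
  | @insert a s ha ih =>
      intro k
      have hpa : 0 ≤ p a := hp a (mem_insert_self a s)
      have hps : ∀ i ∈ s, 0 ≤ p i := fun i hi => hp i (mem_insert_of_mem hi)
      have hsum : 0 ≤ ∑ i ∈ s, p i := Finset.sum_nonneg hps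
      have hesum : ∀ m : ℕ, 0 ≤ ∑ T ∈ s.powersetCard m, ∏ i ∈ T, p i := by
        intro m
        refine Finset.sum_nonneg fun T hT => Finset.prod_nonneg fun i hi => ?_
        exact hps i ((Finset.mem_powersetCard.1 hT).1 hi)
      cases k with
      | zero => simp
      | succ k =>
          rw [Finset.powersetCard_succ_insert ha]
          rw [Finset.sum_union]
          · rw [Finset.sum_image (fun T hT T' hT' h => ?inj)]
            case inj =>
              have haT : a ∉ T := fun h' => ha ((Finset.mem_powersetCard.1 hT).1 h')
              have haT' : a ∉ T' := fun h' => ha ((Finset.mem_powersetCard.1 hT').1 h')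
              have := congrArg (Finset.erase · a) h
              simpa [Finset.erase_insert haT, Finset.erase_insert haT'] using this
            have hprod : ∀ T ∈ s.powersetCard k, ∏ i ∈ insert a T, p i = p a * ∏ i ∈ T, p i := by
              intro T hT
              have haT : a ∉ T := fun h' => ha ((Finset.mem_powersetCard.1 hT).1 h')
              rw [Finset.prod_insert haT]
            rw [Finset.sum_congr rfl hprod, ← Finset.mul_sum]
            rw [Finset.sum_insert ha]
            have ih1 := ih hps (k+1)
            have ih2 := ih hps k
            have hfact : ((k+1).factorial : ℝ) = ((k:ℝ)+1) * (k.factorial : ℝ) := by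
              push_cast [Nat.factorial_succ]; ring
            have hbin := aux_pow_binom (∑ i ∈ s, p i) (p a) hsum hpa k
            have hfk : (0:ℝ) < (k.factorial : ℝ) := by positivity
            calc ((k+1).factorial : ℝ) * (∑ T ∈ s.powersetCard (k+1), ∏ i ∈ T, p i
                    + p a * ∑ T ∈ s.powersetCard k, ∏ i ∈ T, p i)
                = ((k+1).factorial : ℝ) * ∑ T ∈ s.powersetCard (k+1), ∏ i ∈ T, p i
                    + ((k:ℝ)+1) * p a * ((k.factorial : ℝ) * ∑ T ∈ s.powersetCard k, ∏ i ∈ T, p i) := by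
                  rw [hfact]; ring
              _ ≤ (∑ i ∈ s, p i)^(k+1) + ((k:ℝ)+1) * p a * (∑ i ∈ s, p i)^k := by
                  have h1 := ih1
                  have h2 : ((k:ℝ)+1) * p a * ((k.factorial : ℝ) * ∑ T ∈ s.powersetCard k, ∏ i ∈ T, p i)
                      ≤ ((k:ℝ)+1) * p a * (∑ i ∈ s, p i)^k := by
                    apply mul_le_mul_of_nonneg_left ih2 (by positivity)
                  linarith
              _ ≤ (p a + ∑ i ∈ s, p i)^(k+1) := by
                  have : (∑ i ∈ s, p i) + p a = p a + ∑ i ∈ s, p i := by ring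
                  rw [← this]
                  calc (∑ i ∈ s, p i)^(k+1) + ((k:ℝ)+1) * p a * (∑ i ∈ s, p i)^k
                      = (∑ i ∈ s, p i)^(k+1) + ((k:ℝ)+1) * (∑ i ∈ s, p i)^k * p a := by ring
                    _ ≤ _ := by exact_mod_cast hbin
          · -- disjointness
            rw [Finset.disjoint_left]
            intro T hT hT'
            obtain ⟨U, hU, rfl⟩ := Finset.mem_image.1 hT'
            exact ha ((Finset.mem_powersetCard.1 hT).1 (Finset.mem_insert_self a U))

private lemma aux_logsum {ι : Type*} (s : Finset ι) (a b : ι → ℝ)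
    (ha : ∀ i ∈ s, 0 ≤ a i) (hb : ∀ i ∈ s, 0 ≤ b i)
    (hab : ∀ i ∈ s, b i = 0 → a i = 0) (B : ℝ) (hB : ∑ i ∈ s, b i ≤ B) :
    (∑ i ∈ s, a i) * Real.log ((∑ i ∈ s, a i) / B) ≤ ∑ i ∈ s, a i * Real.log (a i / b i) := by
  rcases eq_or_lt_of_le (Finset.sum_nonneg ha) with h0 | hApos
  · have hz : ∀ i ∈ s, a i = 0 := by
      intro i hi
      exact (Finset.sum_eq_zero_iff_of_nonneg ha).1 h0.symm i hi
    rw [← h0]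
    have hz2 : ∑ i ∈ s, a i * Real.log (a i / b i) = 0 :=
      Finset.sum_eq_zero fun i hi => by rw [hz i hi]; simp
    rw [hz2]
    simp
  · set A := ∑ i ∈ s, a i with hA
    have hbposSum : 0 < ∑ i ∈ s, b i := by
      by_contra h
      push_neg at h
      have hb0 : ∑ i ∈ s, b i = 0 := le_antisymm h (Finset.sum_nonneg hb)
      have h1 : ∀ i ∈ s, b i = 0 := (Finset.sum_eq_zero_iff_of_nonneg hb).1 hb0
      have : A = 0 := Finset.sum_eq_zero fun i hi => hab i hi (h1 i hi)
      rw [hA] at this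
      linarith
    have hBpos : 0 < B := lt_of_lt_of_le hbposSum hB
    have key : ∀ i ∈ s, a i - A / B * b i ≤ a i * Real.log (a i / b i) - a i * Real.log (A / B) := by
      intro i hi
      rcases eq_or_lt_of_le (ha i hi) with h0i | hpos
      · rw [← h0i]
        have h1 : 0 ≤ A / B * b i := mul_nonneg (le_of_lt (div_pos hApos hBpos)) (hb i hi)
        simp only [zero_sub, zero_mul, sub_zero, neg_nonpos]
        linarith
      · have hbi : 0 < b i := by
          rcases eq_or_lt_of_le (hb i hi) with h | h
          · exfalso; have := hab i hi h.symm; linarith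
          · exact h
        have ht : 0 < A / B / (a i / b i) := by positivity
        have hlog := Real.log_le_sub_one_of_pos ht
        rw [Real.log_div (by positivity) (by positivity)] at hlog
        have hdiv : A / B / (a i / b i) = A * b i / (B * a i) := by
          field_simp
        rw [hdiv] at hlog
        have := mul_le_mul_of_nonneg_left hlog (le_of_lt hpos)
        have hne : a i * (A * b i / (B * a i)) = A / B * b i := by
          field_simp
        nlinarith [this]
    have hsumkey := Finset.sum_le_sum key
    have hL : ∑ i ∈ s, (a i - A / B * b i) = A - A / B * ∑ i ∈ s, b i := by
      rw [Finset.sum_sub_distrib, ← Finset.mul_sum, hA]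
    have hR : ∑ i ∈ s, (a i * Real.log (a i / b i) - a i * Real.log (A / B))
        = (∑ i ∈ s, a i * Real.log (a i / b i)) - A * Real.log (A / B) := by
      rw [Finset.sum_sub_distrib, ← Finset.sum_mul, hA]
    rw [hL, hR] at hsumkey
    have h2 : A / B * ∑ i ∈ s, b i ≤ A / B * B :=
      mul_le_mul_of_nonneg_left hB (le_of_lt (div_pos hApos hBpos))
    have h3 : A / B * B = A := by field_simp
    linarith

end AuxForProp1

/-- **Proposition 1** (Poisson approximation in relative entropy).
If `S_n = ∑ᵢ Xᵢ` is the sum of `n` (possibly dependent) binary random variables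
with `pᵢ = E[Xᵢ]` and `E[S_n] = ∑ᵢ pᵢ = λ`, then
`D(P_{S_n} ‖ Po(λ)) ≤ ∑ᵢ pᵢ² + [∑ᵢ H(Xᵢ) - H(X₁,…,X_n)]`. -/
theorem poisson_approx_relEnt {Ω : Type*} [MeasurableSpace Ω]
    (μ : Measure Ω) [IsProbabilityMeasure μ]
    (n : ℕ) (X : Fin n → Ω → ℕ)
    (hmeas : ∀ i, Measurable (X i))
    (hbin : ∀ i ω, X i ω ≤ 1)
    (p : Fin n → ℝ) (hp : ∀ i, ∫ ω, (X i ω : ℝ) ∂μ = p i)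
    (lam : ℝ) (hlam : ∑ i, p i = lam) :
    relEnt (distOf μ (fun ω => ∑ i, X i ω)) (poissonPMF lam) ≤
      (∑ i, (p i) ^ 2) +
        ((∑ i, entH (distOf μ (X i))) - entH (distOf μ (fun ω i => X i ω))) := by
  classical
  set Y : Ω → (Fin n → ℕ) := fun ω i => X i ω with hY
  set P : (Fin n → ℕ) → ℝ := distOf μ Y with hPdef
  set q : Fin n → ℕ → ℝ := fun i k => poissonPMF (p i) k with hqdef
  set Qp : (Fin n → ℕ) → ℝ := fun x => ∏ i, q i (x i) with hQpdef
  set box : Finset (Fin n → ℕ) := Fintype.piFinset (fun _ => Finset.range 2) with hbox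
  have hmembox : ∀ x : Fin n → ℕ, x ∈ box ↔ ∀ i, x i ≤ 1 := by
    intro x
    simp [hbox, Fintype.mem_piFinset, Nat.lt_succ_iff]
  have hYmeas : ∀ x : Fin n → ℕ, MeasurableSet {ω | Y ω = x} := by
    intro x
    have : {ω | Y ω = x} = ⋂ i, (X i) ⁻¹' {x i} := by
      ext ω
      simp [hY, funext_iff, Set.mem_iInter]
    rw [this]
    exact MeasurableSet.iInter fun i => (hmeas i) (measurableSet_singleton (x i))
  -- decomposition of events over the box
  have hdecomp : ∀ g : (Fin n → ℕ) → Prop,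
      (μ {ω | g (Y ω)}).toReal = ∑ x ∈ box.filter g, P x := by
    intro g
    have hcover : {ω | g (Y ω)} = ⋃ x ∈ (box.filter g : Finset (Fin n → ℕ)), {ω | Y ω = x} := by
      ext ω
      simp only [Set.mem_setOf_eq, Set.mem_iUnion]
      constructor
      · intro hg
        refine ⟨Y ω, ?_, rfl⟩
        rw [Finset.mem_filter]
        exact ⟨(hmembox (Y ω)).2 fun i => hbin i ω, hg⟩
      · rintro ⟨x, hx, rfl⟩
        exact (Finset.mem_filter.1 hx).2
    have hdisj : (↑(box.filter g) : Set (Fin n → ℕ)).PairwiseDisjoint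
        (fun x => {ω | Y ω = x}) := by
      intro x _ y _ hxy
      simp only [Function.onFun, Set.disjoint_left]
      intro ω h1 h2
      exact hxy (h1 ▸ h2 ▸ rfl)
    rw [hcover, measure_biUnion_finset hdisj fun x _ => hYmeas x]
    exact ENNReal.toReal_sum fun _ _ => measure_ne_top μ _
  have hp1 : ∀ i, distOf μ (X i) 1 = p i := by
    intro i
    rw [← hp i]
    have hind : ∀ ω, (X i ω : ℝ) = Set.indicator {ω | X i ω = 1} (fun _ => (1:ℝ)) ω := by
      intro ω
      rcases Nat.le_one_iff_eq_zero_or_eq_one.1 (hbin i ω) with h | h <;>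
        simp [Set.indicator_apply, h]
    rw [integral_congr_ae (Filter.Eventually.of_forall hind)]
    have hms : MeasurableSet {ω | X i ω = 1} := (hmeas i) (measurableSet_singleton 1)
    rw [MeasureTheory.integral_indicator_const (1:ℝ) hms]
    simp [distOf]
    rfl
  have hp0 : ∀ i, distOf μ (X i) 0 = 1 - p i := by
    intro i
    have hu : {ω | X i ω = 0} ∪ {ω | X i ω = 1} = Set.univ := by
      ext ω
      simp only [Set.mem_union, Set.mem_setOf_eq, Set.mem_univ, iff_true]
      rcases Nat.le_one_iff_eq_zero_or_eq_one.1 (hbin i ω) with h | h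
      · exact Or.inl h
      · exact Or.inr h
    have hd : Disjoint {ω | X i ω = 0} {ω | X i ω = 1} := by
      rw [Set.disjoint_left]
      intro ω h0 h1
      simp only [Set.mem_setOf_eq] at h0 h1
      omega
    have hms1 : MeasurableSet {ω | X i ω = 1} := (hmeas i) (measurableSet_singleton 1)
    have hm := measure_union (μ := μ) hd hms1
    rw [hu, measure_univ] at hm
    have hm2 := congrArg ENNReal.toReal hm
    rw [ENNReal.toReal_add (measure_ne_top μ _) (measure_ne_top μ _), ENNReal.toReal_one] at hm2
    have := hp1 i
    simp only [distOf] at this ⊢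
    linarith
  have hpnn : ∀ i, 0 ≤ p i := by
    intro i
    rw [← hp1 i]
    exact ENNReal.toReal_nonneg
  have hple : ∀ i, p i ≤ 1 := by
    intro i
    rw [← hp1 i]
    exact (ENNReal.toReal_le_toReal (measure_ne_top μ _) (by simp)).2 prob_le_one
  have hlamnn : 0 ≤ lam := hlam ▸ Finset.sum_nonneg fun i _ => hpnn i
  have hPnn : ∀ x, 0 ≤ P x := fun x => ENNReal.toReal_nonneg
  have hQpnn : ∀ x, 0 ≤ Qp x := by
    intro x
    refine Finset.prod_nonneg fun i _ => ?_
    have : (0:ℝ) < Real.exp (-(p i)) := Real.exp_pos _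
    simp only [hqdef, _root_.poissonPMF]
    exact div_nonneg (mul_nonneg (le_of_lt (Real.exp_pos _)) (pow_nonneg (hpnn i) _)) (by positivity)
  -- q-values
  have hq0 : ∀ i, q i 0 = Real.exp (-(p i)) := by
    intro i; simp [hqdef, _root_.poissonPMF]
  have hq1 : ∀ i, q i 1 = Real.exp (-(p i)) * p i := by
    intro i; simp [hqdef, _root_.poissonPMF]
  -- zero of Qp forces zero of P (on box)
  have hQP0 : ∀ x ∈ box, Qp x = 0 → P x = 0 := by
    intro x hx h0
    obtain ⟨i, -, hqi⟩ := Finset.prod_eq_zero_iff.1 h0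
    have hxi := (hmembox x).1 hx i
    have hxi1 : x i = 1 := by
      rcases Nat.le_one_iff_eq_zero_or_eq_one.1 hxi with h | h
      · exfalso
        rw [h, hq0 i] at hqi
        exact (Real.exp_pos _).ne' hqi
      · exact h
    rw [hxi1, hq1 i] at hqi
    have hpi0 : p i = 0 := by
      rcases mul_eq_zero.1 hqi with h | h
      · exact absurd h (Real.exp_pos _).ne'
      · exact h
    have hμ1 : μ {ω | X i ω = 1} = 0 := by
      have h1 := hp1 i
      rw [hpi0] at h1
      simp only [distOf] at h1
      exact (ENNReal.toReal_eq_zero_iff _).1 h1 |>.resolve_right (measure_ne_top μ _)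
    have hsub : {ω | Y ω = x} ⊆ {ω | X i ω = 1} := by
      intro ω hω
      simp only [Set.mem_setOf_eq] at hω ⊢
      rw [show X i ω = Y ω i from rfl, hω, hxi1]
    simp only [hPdef, distOf]
    rw [measure_mono_null hsub hμ1]
    simp
  -- marginal of P in coordinate i
  have hmargc : ∀ (i : Fin n) (c : ℕ), distOf μ (X i) c
      = ∑ x ∈ box.filter (fun x => x i = c), P x := by
    intro i c
    have h := hdecomp (fun x => x i = c)
    rw [Finset.filter_congr_decidable] at h
    simpa [distOf, hY, Finset.filter_congr_decidable] using h
  have hmarg : ∀ (i : Fin n) (g : ℕ → ℝ),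
      ∑ x ∈ box, P x * g (x i) = distOf μ (X i) 0 * g 0 + distOf μ (X i) 1 * g 1 := by
    intro i g
    have hmaps : ∀ x ∈ box, x i ∈ Finset.range 2 :=
      fun x hx => Finset.mem_range.2 (Nat.lt_succ_of_le ((hmembox x).1 hx i))
    rw [← Finset.sum_fiberwise_of_maps_to hmaps (fun x => P x * g (x i))]
    have hinner : ∀ c ∈ Finset.range 2,
        ∑ x ∈ box.filter (fun x => x i = c), P x * g (x i)
          = distOf μ (X i) c * g c := by
      intro c _
      rw [hmargc i c, Finset.sum_mul]
      apply Finset.sum_congr rfl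
      intro x hx
      rw [(Finset.mem_filter.1 hx).2]
    rw [Finset.sum_congr rfl hinner]
    simp [Finset.sum_range_succ]
  -- fiber sums: distribution of the sum
  have hPS : ∀ k : ℕ, distOf μ (fun ω => ∑ i, X i ω) k
      = ∑ x ∈ box.filter (fun x => ∑ i, x i = k), P x := by
    intro k
    have h := hdecomp (fun x => ∑ i, x i = k)
    rw [Finset.filter_congr_decidable] at h
    simpa [distOf, hY, Finset.filter_congr_decidable] using h
  -- Poisson dominates the pushforward of the product measure
  have hQle : ∀ k : ℕ, ∑ x ∈ box.filter (fun x => ∑ i, x i = k), Qp x ≤ poissonPMF lam k := by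
    intro k
    -- rewrite each Qp x as exp(-lam) * product over the support of x
    have hQpx : ∀ x ∈ box.filter (fun x => ∑ i, x i = k),
        Qp x = Real.exp (-lam) * ∏ i ∈ Finset.univ.filter (fun i => x i = 1), p i := by
      intro x hx
      have hxb := (hmembox x).1 (Finset.mem_filter.1 hx).1
      have hfac : ∀ i : Fin n, q i (x i) = Real.exp (-(p i)) * (if x i = 1 then p i else 1) := by
        intro i
        rcases Nat.le_one_iff_eq_zero_or_eq_one.1 (hxb i) with h | h
        · rw [h, hq0 i]
          simp [h]
        · rw [h, hq1 i]
          simp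
      calc Qp x = ∏ i, (Real.exp (-(p i)) * (if x i = 1 then p i else 1)) :=
            Finset.prod_congr rfl fun i _ => hfac i
        _ = (∏ i, Real.exp (-(p i))) * ∏ i, (if x i = 1 then p i else 1) :=
            Finset.prod_mul_distrib
        _ = Real.exp (-lam) * ∏ i ∈ Finset.univ.filter (fun i => x i = 1), p i := by
            rw [← Real.exp_sum, ← Finset.prod_filter]
            congr 1
            rw [← hlam, ← Finset.sum_neg_distrib]
    rw [Finset.sum_congr rfl hQpx, ← Finset.mul_sum]
    -- re-index by the support sets
    have hbij : ∑ x ∈ box.filter (fun x => ∑ i, x i = k),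
        (∏ i ∈ Finset.univ.filter (fun i => x i = 1), p i)
        = ∑ T ∈ Finset.univ.powersetCard k, ∏ i ∈ T, p i := by
      apply Finset.sum_nbij' (i := fun x => Finset.univ.filter (fun i => x i = 1))
        (j := fun T => (fun i => if i ∈ T then 1 else 0))
      · intro x hx
        obtain ⟨hxb', hxs⟩ := Finset.mem_filter.1 hx
        have hxb := (hmembox x).1 hxb'
        rw [Finset.mem_powersetCard]
        refine ⟨Finset.subset_univ _, ?_⟩
        rw [Finset.card_filter]
        rw [← hxs]
        apply Finset.sum_congr rfl
        intro i _
        rcases Nat.le_one_iff_eq_zero_or_eq_one.1 (hxb i) with h | h <;> simp [h]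
      · intro T hT
        obtain ⟨-, hcard⟩ := Finset.mem_powersetCard.1 hT
        rw [Finset.mem_filter]
        constructor
        · rw [hmembox]
          intro i
          split <;> omega
        · rw [← hcard, Finset.card_eq_sum_ones]
          rw [Finset.sum_ite_mem]
          simp
      · intro x hx
        obtain ⟨hxb', -⟩ := Finset.mem_filter.1 hx
        have hxb := (hmembox x).1 hxb'
        funext i
        rcases Nat.le_one_iff_eq_zero_or_eq_one.1 (hxb i) with h | h <;> simp [h]
      · intro T hT
        ext i
        simp
      · intro x hx
        rfl
    rw [hbij]
    -- the symmetric function bound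
    have hesnn : 0 ≤ ∑ T ∈ Finset.univ.powersetCard k, ∏ i ∈ T, p i :=
      Finset.sum_nonneg fun T _ => Finset.prod_nonneg fun i _ => hpnn i
    have hes := aux_esymm Finset.univ p (fun i _ => hpnn i) k
    rw [hlam] at hes
    have hfk : (0:ℝ) < (k.factorial : ℝ) := by positivity
    have h1 : ∑ T ∈ Finset.univ.powersetCard k, ∏ i ∈ T, p i ≤ lam ^ k / (k.factorial : ℝ) := by
      rw [le_div_iff₀ hfk]
      linarith [hes]
    calc Real.exp (-lam) * ∑ T ∈ Finset.univ.powersetCard k, ∏ i ∈ T, p i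
        ≤ Real.exp (-lam) * (lam ^ k / (k.factorial : ℝ)) :=
          mul_le_mul_of_nonneg_left h1 (le_of_lt (Real.exp_pos _))
      _ = poissonPMF lam k := by
          simp only [_root_.poissonPMF]
          ring
  -- Step 1: relEnt is a finite sum
  have hSbound : ∀ k : ℕ, n < k → distOf μ (fun ω => ∑ i, X i ω) k = 0 := by
    intro k hk
    have he : {ω | (∑ i, X i ω) = k} = ∅ := by
      ext ω
      simp only [Set.mem_setOf_eq, Set.mem_empty_iff_false, iff_false]
      intro h
      have : (∑ i, X i ω) ≤ n := by
        calc ∑ i, X i ω ≤ ∑ _i : Fin n, 1 := Finset.sum_le_sum fun i _ => hbin i ω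
          _ = n := by simp
      omega
    simp [distOf, he]
  have hstep1 : relEnt (distOf μ (fun ω => ∑ i, X i ω)) (poissonPMF lam)
      = ∑ k ∈ Finset.range (n+1), distOf μ (fun ω => ∑ i, X i ω) k *
          Real.log (distOf μ (fun ω => ∑ i, X i ω) k / poissonPMF lam k) := by
    unfold relEnt
    apply tsum_eq_sum
    intro k hk
    have hk' : n < k := by
      have := Finset.mem_range.not.1 hk
      omega
    rw [hSbound k hk']
    ring
  -- Step 2: log-sum inequality fiber by fiber
  have hstep2 : ∀ k ∈ Finset.range (n+1),
      distOf μ (fun ω => ∑ i, X i ω) k *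
          Real.log (distOf μ (fun ω => ∑ i, X i ω) k / poissonPMF lam k)
        ≤ ∑ x ∈ box.filter (fun x => ∑ i, x i = k), P x * Real.log (P x / Qp x) := by
    intro k _
    rw [hPS k]
    exact aux_logsum _ _ _ (fun x _ => hPnn x) (fun x _ => hQpnn x)
      (fun x hx => hQP0 x (Finset.mem_filter.1 hx).1) _ (hQle k)
  -- Step 3: regroup fibers
  have hstep3 : ∑ k ∈ Finset.range (n+1), ∑ x ∈ box.filter (fun x => ∑ i, x i = k),
        P x * Real.log (P x / Qp x)
      = ∑ x ∈ box, P x * Real.log (P x / Qp x) := by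
    refine Finset.sum_fiberwise_of_maps_to (fun x hx => ?_) _
    rw [Finset.mem_range, Nat.lt_succ_iff]
    calc ∑ i, x i ≤ ∑ i : Fin n, 1 := Finset.sum_le_sum fun i _ => (hmembox x).1 hx i
      _ = n := by simp
  -- Step 4: split the log
  have hstep4 : ∑ x ∈ box, P x * Real.log (P x / Qp x)
      = (∑ x ∈ box, P x * Real.log (P x)) - ∑ i, ∑ x ∈ box, P x * Real.log (q i (x i)) := by
    rw [Finset.sum_comm, ← Finset.sum_sub_distrib]
    apply Finset.sum_congr rfl
    intro x hx
    by_cases hPx : P x = 0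
    · simp [hPx]
    · have hQx : Qp x ≠ 0 := fun h => hPx (hQP0 x hx h)
      have hqix : ∀ i : Fin n, q i (x i) ≠ 0 := by
        intro i h
        exact hQx (Finset.prod_eq_zero (Finset.mem_univ i) h)
      have hlogQ : Real.log (Qp x) = ∑ i, Real.log (q i (x i)) :=
        Real.log_prod (fun i _ => hqix i)
      rw [Real.log_div hPx hQx, hlogQ, mul_sub, Finset.mul_sum]
  -- Step 5: per-coordinate terms
  have hstep5 : ∀ i, ∑ x ∈ box, P x * Real.log (q i (x i)) = -(p i) + p i * Real.log (p i) := by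
    intro i
    rw [hmarg i (fun c => Real.log (q i c))]
    rw [hp0 i, hp1 i, hq0 i, hq1 i, Real.log_exp]
    have hlast : p i * Real.log (Real.exp (-(p i)) * p i) = -(p i)^2 + p i * Real.log (p i) := by
      rcases eq_or_lt_of_le (hpnn i) with h | h
      · rw [← h]; simp
      · rw [Real.log_mul (Real.exp_ne_zero _) (ne_of_gt h), Real.log_exp]
        ring
    rw [hlast]
    ring
  -- entropies
  have hPoff : ∀ x : Fin n → ℕ, x ∉ box → P x = 0 := by
    intro x hx
    have : {ω | Y ω = x} = ∅ := by
      ext ω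
      simp only [Set.mem_setOf_eq, Set.mem_empty_iff_false, iff_false]
      intro h
      exact hx ((hmembox x).2 fun i => by rw [← h]; exact hbin i ω)
    simp [hPdef, distOf, this]
  have hHY : entH (distOf μ (fun ω i => X i ω)) = -∑ x ∈ box, P x * Real.log (P x) := by
    have hPe : distOf μ (fun ω i => X i ω) = P := rfl
    unfold entH
    rw [hPe]
    congr 1
    apply tsum_eq_sum
    intro x hx
    rw [hPoff x hx]
    ring
  have hHi : ∀ i, entH (distOf μ (X i))
      = -((1 - p i) * Real.log (1 - p i) + p i * Real.log (p i)) := by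
    intro i
    have hXoff : ∀ k : ℕ, k ∉ Finset.range 2 → distOf μ (X i) k * Real.log (distOf μ (X i) k) = 0 := by
      intro k hk
      have hk2 : 2 ≤ k := by
        have := Finset.mem_range.not.1 hk
        omega
      have he : {ω | X i ω = k} = ∅ := by
        ext ω
        simp only [Set.mem_setOf_eq, Set.mem_empty_iff_false, iff_false]
        intro h
        have := hbin i ω
        omega
      simp [distOf, he]
    unfold entH
    rw [tsum_eq_sum hXoff]
    simp only [Finset.sum_range_succ, Finset.sum_range_zero, zero_add]
    rw [hp0 i, hp1 i]
  -- final elementary inequality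
  have hfin : ∀ i, p i + (1 - p i) * Real.log (1 - p i) ≤ (p i)^2 := by
    intro i
    rcases eq_or_lt_of_le (hple i) with h1 | h1
    · rw [h1]; simp
    · have h2 : (0:ℝ) < 1 - p i := by linarith
      have h3 := Real.log_le_sub_one_of_pos h2
      nlinarith [hpnn i]
  -- assemble
  calc relEnt (distOf μ (fun ω => ∑ i, X i ω)) (poissonPMF lam)
      ≤ ∑ x ∈ box, P x * Real.log (P x / Qp x) := by
        rw [hstep1, ← hstep3]
        exact Finset.sum_le_sum hstep2
    _ = (∑ x ∈ box, P x * Real.log (P x)) + ∑ i, (p i - p i * Real.log (p i)) := by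
        rw [hstep4]
        rw [Finset.sum_congr rfl fun i _ => hstep5 i]
        rw [sub_eq_add_neg, ← Finset.sum_neg_distrib]
        congr 1
        apply Finset.sum_congr rfl
        intro i _
        ring
    _ ≤ (∑ i, (p i) ^ 2) + ((∑ i, entH (distOf μ (X i))) - entH (distOf μ (fun ω i => X i ω))) := by
        rw [hHY]
        rw [Finset.sum_congr rfl fun i _ => hHi i]
        have : ∀ i ∈ Finset.univ, p i - p i * Real.log (p i)
            ≤ (p i)^2 + -((1 - p i) * Real.log (1 - p i) + p i * Real.log (p i)) := by
          intro i _
          have := hfin i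
          nlinarith []
        have hsum := Finset.sum_le_sum this
        rw [Finset.sum_add_distrib] at hsum
        linarith []
end

section
/- Let X_1, X_2, ..., X_n be independent {0,1}-valued random variables with p_i = E[X_i], and let S_n = X_1 + ... + X_n with E[S_n] = Σ_{i=1}^n p_i = λ. Then D(P_{S_n} ‖ Po(λ)) ≤ Σ_{i=1}^n p_i². -/
open MeasureTheory ProbabilityTheory Real Filter

lemma poissonPMF_nonneg {l : ℝ} (hl : 0 ≤ l) (k : ℕ) : 0 ≤ poissonPMF l k := by
  unfold _root_.poissonPMF; positivity

lemma poissonPMF_eq_zero_iff {l : ℝ} (hl : 0 ≤ l) {k : ℕ} :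
    poissonPMF l k = 0 ↔ (l = 0 ∧ k ≠ 0) := by
  unfold _root_.poissonPMF
  rw [div_eq_zero_iff]
  constructor
  · rintro (h | h)
    · rcases mul_eq_zero.mp h with h | h
      · exact absurd h (Real.exp_ne_zero _)
      · exact pow_eq_zero_iff' (M₀ := ℝ) |>.mp h
    · exact absurd h (by positivity)
  · rintro ⟨rfl, hk⟩
    left
    simp [zero_pow hk]

-- log sum inequality
lemma logSum {ι : Type*} (t : Finset ι) (a b : ι → ℝ) (ha : ∀ i ∈ t, 0 ≤ a i)
    (hb : ∀ i ∈ t, 0 ≤ b i) (hab : ∀ i ∈ t, b i = 0 → a i = 0) :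
    (∑ i ∈ t, a i) * Real.log ((∑ i ∈ t, a i) / (∑ i ∈ t, b i)) ≤
      ∑ i ∈ t, a i * Real.log (a i / b i) := by
  rcases eq_or_lt_of_le (Finset.sum_nonneg ha) with hA | hA
  · have h0 : ∀ i ∈ t, a i = 0 := (Finset.sum_eq_zero_iff_of_nonneg ha).mp hA.symm
    have hz : (∑ i ∈ t, a i) = 0 := hA.symm
    rw [hz, zero_mul]
    exact le_of_eq (Finset.sum_eq_zero (fun i hi => by rw [h0 i hi]; ring)).symm
  · have hB : 0 < ∑ i ∈ t, b i := by
      rcases eq_or_lt_of_le (Finset.sum_nonneg hb) with hB | hB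
      · exfalso
        have h0 : ∀ i ∈ t, b i = 0 := (Finset.sum_eq_zero_iff_of_nonneg hb).mp hB.symm
        have : ∀ i ∈ t, a i = 0 := fun i hi => hab i hi (h0 i hi)
        rw [Finset.sum_eq_zero this] at hA; exact lt_irrefl _ hA
      · exact hB
    set A := ∑ i ∈ t, a i with hAdef
    set B := ∑ i ∈ t, b i with hBdef
    have key : ∀ i ∈ t, a i - A / B * b i ≤ a i * Real.log (a i / b i) - a i * Real.log (A / B) := by
      intro i hi
      rcases eq_or_lt_of_le (ha i hi) with h0 | h0
      · rw [← h0]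
        have h1 : 0 ≤ A / B * b i := mul_nonneg (by positivity) (hb i hi)
        simp only [zero_mul, zero_sub, sub_zero]
        linarith
      · have hbi : 0 < b i := by
          rcases eq_or_lt_of_le (hb i hi) with h | h
          · exact absurd (hab i hi h.symm) (ne_of_gt h0)
          · exact h
        have hlog : Real.log (a i / b i) - Real.log (A / B) = Real.log ((a i * B) / (b i * A)) := by
          rw [← Real.log_div (by positivity) (by positivity)]
          congr 1
          field_simp
        have h1t : 1 - (b i * A) / (a i * B) ≤ Real.log ((a i * B) / (b i * A)) := by
          have h2 := Real.log_le_sub_one_of_pos (x := (b i * A) / (a i * B)) (by positivity)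
          have hrw : Real.log ((b i * A) / (a i * B)) = - Real.log ((a i * B) / (b i * A)) := by
            rw [← Real.log_inv]
            congr 1
            rw [inv_div]
          rw [hrw] at h2
          linarith
        have e1 : a i * Real.log (a i / b i) - a i * Real.log (A / B)
            = a i * Real.log ((a i * B) / (b i * A)) := by rw [← mul_sub, hlog]
        have e2 : a i * (1 - (b i * A) / (a i * B)) ≤ a i * Real.log ((a i * B) / (b i * A)) :=
          mul_le_mul_of_nonneg_left h1t (le_of_lt h0)
        have e3 : a i * (1 - (b i * A) / (a i * B)) = a i - A / B * b i := by
          field_simp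
        linarith
    have hsum := Finset.sum_le_sum key
    rw [Finset.sum_sub_distrib, Finset.sum_sub_distrib, ← Finset.mul_sum, ← Finset.sum_mul] at hsum
    have hAB : A / B * B = A := by field_simp
    linarith

noncomputable def convP (f g : ℕ → ℝ) (s : ℕ) : ℝ :=
  ∑ k ∈ Finset.range (s + 1), f k * g (s - k)

lemma conv_sum_eq {g : ℕ → ℕ → ℝ} {m1 m2 : ℕ}
    (h1 : ∀ k j, m1 ≤ k → g k j = 0) (h2 : ∀ k j, m2 ≤ j → g k j = 0) :
    ∑ s ∈ Finset.range (m1 + m2), ∑ k ∈ Finset.range (s + 1), g k (s - k)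
      = ∑ k ∈ Finset.range m1, ∑ j ∈ Finset.range m2, g k j := by
  classical
  set M := m1 + m2 with hM
  have lhs_eq : ∑ s ∈ Finset.range M, ∑ k ∈ Finset.range (s + 1), g k (s - k)
      = ∑ x ∈ (Finset.range M).sigma (fun s => Finset.range (s + 1)), g x.2 (x.1 - x.2) := by
    rw [Finset.sum_sigma]
  rw [lhs_eq]
  have step : ∑ x ∈ (Finset.range M).sigma (fun s => Finset.range (s + 1)), g x.2 (x.1 - x.2)
      = ∑ p ∈ ((Finset.range M) ×ˢ (Finset.range M)).filter (fun p => p.1 + p.2 < M),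
          g p.1 p.2 := by
    apply Finset.sum_nbij' (i := fun x => (x.2, x.1 - x.2)) (j := fun p => ⟨p.1 + p.2, p.1⟩)
    · intro x hx
      simp only [Finset.mem_sigma, Finset.mem_range] at hx
      simp only [Finset.mem_filter, Finset.mem_product, Finset.mem_range]
      omega
    · intro p hp
      simp only [Finset.mem_filter, Finset.mem_product, Finset.mem_range] at hp
      simp only [Finset.mem_sigma, Finset.mem_range]
      omega
    · intro x hx
      simp only [Finset.mem_sigma, Finset.mem_range] at hx
      have : x.2 + (x.1 - x.2) = x.1 := by omega
      exact Sigma.ext (by simpa using this) (by simp)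
    · intro p hp
      simp
    · intro x hx
      simp
  rw [step]
  have sub1 : ((Finset.range M) ×ˢ (Finset.range M)).filter (fun p => p.1 + p.2 < M)
      ⊆ (Finset.range M) ×ˢ (Finset.range M) := Finset.filter_subset _ _
  rw [Finset.sum_subset sub1]
  · rw [← Finset.sum_subset (s₁ := (Finset.range m1) ×ˢ (Finset.range m2))
        (s₂ := (Finset.range M) ×ˢ (Finset.range M))]
    · rw [Finset.sum_product]
    · intro p hp
      simp only [Finset.mem_product, Finset.mem_range] at hp ⊢
      omega
    · intro p hp hnp
      simp only [Finset.mem_product, Finset.mem_range] at hp hnp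
      rcases (by omega : m1 ≤ p.1 ∨ m2 ≤ p.2) with h | h
      · exact h1 _ _ h
      · exact h2 _ _ h
  · intro p hp hnp
    simp only [Finset.mem_product, Finset.mem_range] at hp
    simp only [Finset.mem_filter, Finset.mem_product, Finset.mem_range, not_and, not_lt] at hnp
    have := hnp ⟨hp.1, hp.2⟩
    rcases (by omega : m1 ≤ p.1 ∨ m2 ≤ p.2) with h | h
    · exact h1 _ _ h
    · exact h2 _ _ h

lemma poisson_conv (a b : ℝ) (s : ℕ) :
    convP (poissonPMF a) (poissonPMF b) s = poissonPMF (a + b) s := by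
  unfold convP _root_.poissonPMF
  rw [add_pow]
  rw [Finset.mul_sum, Finset.sum_div]
  apply Finset.sum_congr rfl
  intro k hk
  have hks : k ≤ s := Nat.lt_succ_iff.mp (Finset.mem_range.mp hk)
  have hfac : (Nat.choose s k : ℝ) * (Nat.factorial k) * (Nat.factorial (s - k))
      = (Nat.factorial s) := by
    exact_mod_cast congrArg (Nat.cast (R := ℝ)) (Nat.choose_mul_factorial_mul_factorial hks)
  have e : Real.exp (-(a + b)) = Real.exp (-a) * Real.exp (-b) := by
    rw [← Real.exp_add]; ring_nf
  rw [e]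
  have f1 : (Nat.factorial k : ℝ) ≠ 0 := Nat.cast_ne_zero.mpr (Nat.factorial_ne_zero k)
  have f2 : (Nat.factorial (s - k) : ℝ) ≠ 0 := Nat.cast_ne_zero.mpr (Nat.factorial_ne_zero _)
  have f3 : (Nat.factorial s : ℝ) ≠ 0 := Nat.cast_ne_zero.mpr (Nat.factorial_ne_zero s)
  field_simp
  rw [← hfac]
  ring

def Good (P : ℕ → ℝ) (l : ℝ) (m : ℕ) : Prop :=
  (∀ k, 0 ≤ P k) ∧ (∀ k, m ≤ k → P k = 0) ∧ (∑ k ∈ Finset.range m, P k = 1) ∧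
    (∀ k, poissonPMF l k = 0 → P k = 0) ∧ 0 ≤ l

lemma tsum_eq_range_sum {f : ℕ → ℝ} {m : ℕ} (h : ∀ k, m ≤ k → f k = 0) :
    ∑' k, f k = ∑ k ∈ Finset.range m, f k :=
  tsum_eq_sum (fun b hb => h b (Nat.le_of_not_lt (by simpa using hb)))

lemma relEnt_eq_sum {P Q : ℕ → ℝ} {m : ℕ} (h : ∀ k, m ≤ k → P k = 0) :
    relEnt P Q = ∑ k ∈ Finset.range m, P k * Real.log (P k / Q k) :=
  tsum_eq_range_sum (fun k hk => by rw [h k hk, zero_mul])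

lemma tensor {P1 P2 : ℕ → ℝ} {l1 l2 : ℝ} {m1 m2 : ℕ}
    (h1 : Good P1 l1 m1) (h2 : Good P2 l2 m2) :
    Good (convP P1 P2) (l1 + l2) (m1 + m2) ∧
      relEnt (convP P1 P2) (poissonPMF (l1 + l2)) ≤
        relEnt P1 (poissonPMF l1) + relEnt P2 (poissonPMF l2) := by
  obtain ⟨h1n, h1b, h1m, h1a, h1l⟩ := h1
  obtain ⟨h2n, h2b, h2m, h2a, h2l⟩ := h2
  have hcn : ∀ s, 0 ≤ convP P1 P2 s := fun s =>
    Finset.sum_nonneg (fun k _ => mul_nonneg (h1n k) (h2n _))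
  have hcb : ∀ s, m1 + m2 ≤ s → convP P1 P2 s = 0 := by
    intro s hs
    apply Finset.sum_eq_zero
    intro k hk
    rcases le_or_gt m1 k with h | h
    · rw [h1b k h, zero_mul]
    · rw [h2b (s - k) (by omega), mul_zero]
  have hg1 : ∀ k j, m1 ≤ k → P1 k * P2 j = 0 := fun k j h => by rw [h1b k h, zero_mul]
  have hg2 : ∀ k j, m2 ≤ j → P1 k * P2 j = 0 := fun k j h => by rw [h2b j h, mul_zero]
  have hcm : ∑ s ∈ Finset.range (m1 + m2), convP P1 P2 s = 1 := by
    unfold convP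
    rw [conv_sum_eq hg1 hg2]
    rw [← Finset.sum_mul_sum]
    rw [h1m, h2m, one_mul]
  have hca : ∀ s, poissonPMF (l1 + l2) s = 0 → convP P1 P2 s = 0 := by
    intro s hs
    rw [poissonPMF_eq_zero_iff (by linarith)] at hs
    obtain ⟨hl0, hs0⟩ := hs
    have hl1 : l1 = 0 := by linarith
    have hl2 : l2 = 0 := by linarith
    apply Finset.sum_eq_zero
    intro k hk
    rcases Nat.eq_zero_or_pos k with rfl | hkpos
    · rw [h2a (s - 0) (by rw [poissonPMF_eq_zero_iff h2l]; exact ⟨hl2, by omega⟩), mul_zero]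
    · rw [h1a k (by rw [poissonPMF_eq_zero_iff h1l]; exact ⟨hl1, by omega⟩), zero_mul]
  refine ⟨⟨hcn, hcb, hcm, hca, by linarith⟩, ?_⟩
  -- now the relEnt inequality
  rw [relEnt_eq_sum hcb, relEnt_eq_sum h1b, relEnt_eq_sum h2b]
  set g : ℕ → ℕ → ℝ := fun k j =>
    P1 k * P2 j * Real.log ((P1 k * P2 j) / (poissonPMF l1 k * poissonPMF l2 j)) with hgdef
  have step1 : ∑ s ∈ Finset.range (m1 + m2),
      convP P1 P2 s * Real.log (convP P1 P2 s / poissonPMF (l1 + l2) s)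
      ≤ ∑ s ∈ Finset.range (m1 + m2), ∑ k ∈ Finset.range (s + 1), g k (s - k) := by
    apply Finset.sum_le_sum
    intro s _
    have := logSum (Finset.range (s + 1)) (fun k => P1 k * P2 (s - k))
      (fun k => poissonPMF l1 k * poissonPMF l2 (s - k))
      (fun k _ => mul_nonneg (h1n k) (h2n _))
      (fun k _ => mul_nonneg (poissonPMF_nonneg h1l k) (poissonPMF_nonneg h2l _))
      (fun k _ hz => by
        have hz' : poissonPMF l1 k * poissonPMF l2 (s - k) = 0 := hz
        show P1 k * P2 (s - k) = 0
        rcases mul_eq_zero.mp hz' with h | h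
        · rw [h1a k h, zero_mul]
        · rw [h2a _ h, mul_zero])
    rw [← poisson_conv l1 l2 s]
    exact this
  have step2 : ∑ s ∈ Finset.range (m1 + m2), ∑ k ∈ Finset.range (s + 1), g k (s - k)
      = ∑ k ∈ Finset.range m1, ∑ j ∈ Finset.range m2, g k j :=
    conv_sum_eq (fun k j h => by simp only [hgdef, h1b k h]; ring)
      (fun k j h => by simp only [hgdef, h2b j h]; ring)
  have step3 : ∀ k j, g k j = (P1 k * Real.log (P1 k / poissonPMF l1 k)) * P2 j
      + P1 k * (P2 j * Real.log (P2 j / poissonPMF l2 j)) := by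
    intro k j
    rcases eq_or_lt_of_le (h1n k) with hk0 | hk0
    · simp only [hgdef, ← hk0]; ring
    rcases eq_or_lt_of_le (h2n j) with hj0 | hj0
    · simp only [hgdef, ← hj0]; ring
    have hq1 : poissonPMF l1 k ≠ 0 := fun h => hk0.ne' (h1a k h)
    have hq2 : poissonPMF l2 j ≠ 0 := fun h => hj0.ne' (h2a j h)
    simp only [hgdef]
    rw [mul_div_mul_comm, Real.log_mul (by positivity) (by positivity)]
    ring
  have step4 : ∑ k ∈ Finset.range m1, ∑ j ∈ Finset.range m2, g k j
      = (∑ k ∈ Finset.range m1, P1 k * Real.log (P1 k / poissonPMF l1 k))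
        + (∑ j ∈ Finset.range m2, P2 j * Real.log (P2 j / poissonPMF l2 j)) := by
    calc ∑ k ∈ Finset.range m1, ∑ j ∈ Finset.range m2, g k j
        = ∑ k ∈ Finset.range m1, ∑ j ∈ Finset.range m2,
            ((P1 k * Real.log (P1 k / poissonPMF l1 k)) * P2 j
              + P1 k * (P2 j * Real.log (P2 j / poissonPMF l2 j))) := by
          exact Finset.sum_congr rfl fun k _ => Finset.sum_congr rfl fun j _ => step3 k j
      _ = _ := by
          have hk : ∀ k, ∑ j ∈ Finset.range m2,
              ((P1 k * Real.log (P1 k / poissonPMF l1 k)) * P2 j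
                + P1 k * (P2 j * Real.log (P2 j / poissonPMF l2 j)))
              = P1 k * Real.log (P1 k / poissonPMF l1 k)
                + P1 k * (∑ j ∈ Finset.range m2, P2 j * Real.log (P2 j / poissonPMF l2 j)) := by
            intro k
            rw [Finset.sum_add_distrib, ← Finset.mul_sum, ← Finset.mul_sum, h2m, mul_one]
          rw [Finset.sum_congr rfl (fun k _ => hk k), Finset.sum_add_distrib,
            ← Finset.sum_mul, h1m, one_mul]
  calc _ ≤ _ := step1
    _ = _ := step2
    _ = _ := step4

noncomputable def bern (p : ℝ) (k : ℕ) : ℝ :=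
  if k = 0 then 1 - p else if k = 1 then p else 0

lemma bern_bdd {p : ℝ} : ∀ k, 2 ≤ k → bern p k = 0 := by
  intro k hk
  unfold bern
  rw [if_neg (by omega), if_neg (by omega)]

lemma bern_good {p : ℝ} (hp0 : 0 ≤ p) (hp1 : p ≤ 1) : Good (bern p) p 2 := by
  refine ⟨?_, bern_bdd, ?_, ?_, hp0⟩
  · intro k
    unfold bern
    rcases k with _ | _ | k <;> simp <;> linarith
  · simp [Finset.sum_range_succ, bern]
  · intro k hk
    rw [poissonPMF_eq_zero_iff hp0] at hk
    obtain ⟨rfl, hk0⟩ := hk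
    rcases k with _ | _ | k
    · omega
    · simp [bern]
    · exact bern_bdd _ (by omega)

lemma bern_relEnt {p : ℝ} (hp0 : 0 ≤ p) (hp1 : p ≤ 1) :
    relEnt (bern p) (poissonPMF p) ≤ p ^ 2 := by
  rw [relEnt_eq_sum (m := 2) bern_bdd]
  have hb0 : bern p 0 = 1 - p := by simp [bern]
  have hb1 : bern p 1 = p := by simp [bern]
  have hp0' : poissonPMF p 0 = Real.exp (-p) := by
    unfold _root_.poissonPMF; simp
  have hp1' : poissonPMF p 1 = Real.exp (-p) * p := by
    unfold _root_.poissonPMF; simp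
  rw [Finset.sum_range_succ, Finset.sum_range_succ, Finset.sum_range_zero, zero_add,
    hb0, hb1, hp0', hp1']
  have hterm2 : p * Real.log (p / (Real.exp (-p) * p)) ≤ p ^ 2 := by
    rcases eq_or_lt_of_le hp0 with h | h
    · rw [← h]; simp
    · have : p / (Real.exp (-p) * p) = Real.exp p := by
        rw [Real.exp_neg]
        field_simp
      rw [this, Real.log_exp]
      nlinarith
  have hterm1 : (1 - p) * Real.log ((1 - p) / Real.exp (-p)) ≤ 0 := by
    rcases eq_or_lt_of_le hp1 with h | h
    · rw [h]; simp
    · have h1p : 0 < 1 - p := by linarith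
      rw [Real.log_div (ne_of_gt h1p) (Real.exp_ne_zero _), Real.log_exp]
      have hlog : Real.log (1 - p) ≤ -p := by
        have := Real.log_le_sub_one_of_pos h1p
        linarith
      have : Real.log (1 - p) - -p ≤ 0 := by linarith
      exact mul_nonpos_of_nonneg_of_nonpos (le_of_lt h1p) (by linarith)
  linarith

-- measure lemmas
lemma distOf_add_of_indep {Ω : Type*} [MeasurableSpace Ω] (μ : Measure Ω) [IsProbabilityMeasure μ]
    {A B : Ω → ℕ} (hA : Measurable A) (hB : Measurable B) (h : IndepFun A B μ) :
    distOf μ (fun ω => A ω + B ω) = convP (distOf μ A) (distOf μ B) := by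
  funext s
  have hset : {ω | A ω + B ω = s}
      = ⋃ k ∈ Finset.range (s + 1), ((A ⁻¹' {k}) ∩ (B ⁻¹' {s - k})) := by
    ext ω
    simp only [Set.mem_setOf_eq, Set.mem_iUnion, Set.mem_inter_iff, Set.mem_preimage,
      Set.mem_singleton_iff, Finset.mem_range]
    constructor
    · intro hs
      exact ⟨A ω, by omega, rfl, by omega⟩
    · rintro ⟨k, hk, h1, h2⟩
      omega
  have hdisj : (↑(Finset.range (s + 1)) : Set ℕ).PairwiseDisjoint
      (fun k => (A ⁻¹' {k}) ∩ (B ⁻¹' {s - k})) := by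
    intro i _ j _ hij
    apply Set.disjoint_left.mpr
    rintro ω ⟨h1, _⟩ ⟨h2, _⟩
    exact hij (h1.symm.trans h2)
  unfold distOf convP
  rw [hset, measure_biUnion_finset hdisj
    (fun k _ => (hA (measurableSet_singleton k)).inter (hB (measurableSet_singleton (s - k))))]
  rw [ENNReal.toReal_sum (fun k _ => measure_ne_top μ _)]
  apply Finset.sum_congr rfl
  intro k _
  rw [h.measure_inter_preimage_eq_mul _ _ (measurableSet_singleton k)
    (measurableSet_singleton (s - k)), ENNReal.toReal_mul]
  congr

lemma distOf_binary {Ω : Type*} [MeasurableSpace Ω] (μ : Measure Ω) [IsProbabilityMeasure μ]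
    {Y : Ω → ℕ} (hY : Measurable Y) (hb : ∀ ω, Y ω ≤ 1) {q : ℝ}
    (hq : ∫ ω, (Y ω : ℝ) ∂μ = q) :
    distOf μ Y = bern q ∧ 0 ≤ q ∧ q ≤ 1 := by
  have hind : (fun ω => (Y ω : ℝ)) = (Y ⁻¹' {1}).indicator (fun _ => (1 : ℝ)) := by
    funext ω
    by_cases h : Y ω = 1
    · simp [Set.indicator_of_mem, h, Set.mem_preimage]
    · have h0 : Y ω = 0 := by have := hb ω; omega
      simp [Set.indicator_of_notMem, h, Set.mem_preimage, h0]
  have hq1 : (μ (Y ⁻¹' {1})).toReal = q := by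
    rw [← hq, hind]
    rw [integral_indicator_const _ (hY (measurableSet_singleton 1))]
    simp [Measure.real]
  have hcompl : Y ⁻¹' {0} = (Y ⁻¹' {1})ᶜ := by
    ext ω
    simp only [Set.mem_preimage, Set.mem_singleton_iff, Set.mem_compl_iff]
    have := hb ω; omega
  have hq0 : (μ (Y ⁻¹' {0})).toReal = 1 - q := by
    rw [hcompl, measure_compl (hY (measurableSet_singleton 1)) (measure_ne_top μ _),
      measure_univ]
    rw [ENNReal.toReal_sub_of_le prob_le_one ENNReal.one_ne_top]
    rw [hq1]; simp
  have hqnn : 0 ≤ q := hq1 ▸ ENNReal.toReal_nonneg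
  have hqle : q ≤ 1 := by
    have := ENNReal.toReal_nonneg (a := μ (Y ⁻¹' {0}))
    rw [hq0] at this; linarith
  refine ⟨?_, hqnn, hqle⟩
  funext k
  unfold distOf bern
  rcases k with _ | _ | k
  · rw [if_pos rfl]
    exact hq0
  · rw [if_neg (by omega), if_pos rfl]
    exact hq1
  · rw [if_neg (by omega), if_neg (by omega)]
    have : {ω | Y ω = k + 2} = ∅ := by
      ext ω; simp only [Set.mem_setOf_eq, Set.mem_empty_iff_false, iff_false]
      have := hb ω; omega
    rw [this]
    simp

lemma distOf_const_zero {Ω : Type*} [MeasurableSpace Ω] (μ : Measure Ω)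
    [IsProbabilityMeasure μ] :
    distOf μ (fun _ : Ω => (0 : ℕ)) = bern 0 := by
  funext k
  unfold distOf bern
  rcases k with _ | _ | k
  · have : {ω : Ω | (0 : ℕ) = 0} = Set.univ := by ext ω; simp
    rw [this, measure_univ, if_pos rfl]
    simp
  · have : {ω : Ω | (0 : ℕ) = 1} = ∅ := by ext ω; simp
    rw [this, if_neg (by omega), if_pos rfl]
    simp
  · have : {ω : Ω | (0 : ℕ) = k + 2} = ∅ := by ext ω; simp
    rw [this, if_neg (by omega), if_neg (by omega)]
    simp

lemma main_aux {Ω : Type*} [MeasurableSpace Ω]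
    (μ : Measure Ω) [IsProbabilityMeasure μ]
    (n : ℕ) (X : Fin n → Ω → ℕ)
    (hmeas : ∀ i, Measurable (X i))
    (hbin : ∀ i ω, X i ω ≤ 1)
    (hindep : iIndepFun X μ)
    (p : Fin n → ℝ) (hp : ∀ i, ∫ ω, (X i ω : ℝ) ∂μ = p i)
    (s : Finset (Fin n)) :
    (∃ m, Good (distOf μ (fun ω => ∑ i ∈ s, X i ω)) (∑ i ∈ s, p i) m) ∧
      relEnt (distOf μ (fun ω => ∑ i ∈ s, X i ω)) (poissonPMF (∑ i ∈ s, p i))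
        ≤ ∑ i ∈ s, p i ^ 2 := by
  classical
  induction s using Finset.induction_on with
  | empty =>
      simp only [Finset.sum_empty]
      rw [distOf_const_zero μ]
      constructor
      · exact ⟨2, bern_good le_rfl zero_le_one⟩
      · have := bern_relEnt (p := 0) le_rfl zero_le_one
        simpa using this
  | @insert j s hj ih =>
      obtain ⟨⟨m, hGood⟩, hEnt⟩ := ih
      obtain ⟨hXj, hpj0, hpj1⟩ := distOf_binary μ (hmeas j) (hbin j) (hp j)
      have hSmeas : Measurable (fun ω => ∑ i ∈ s, X i ω) := by
        apply Finset.measurable_sum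
        exact fun i _ => hmeas i
      have hIndep : IndepFun (X j) (fun ω => ∑ i ∈ s, X i ω) μ := by
        have h1 : IndepFun (∑ i ∈ s, X i) (X j) μ :=
          iIndepFun.indepFun_finsetSum_of_notMem hindep hmeas hj
        have h2 : (∑ i ∈ s, X i) = (fun ω => ∑ i ∈ s, X i ω) := by
          funext ω; simp
        rw [h2] at h1
        exact h1.symm
      have hdist : distOf μ (fun ω => ∑ i ∈ insert j s, X i ω)
          = convP (bern (p j)) (distOf μ (fun ω => ∑ i ∈ s, X i ω)) := by
        have e : (fun ω => ∑ i ∈ insert j s, X i ω)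
            = (fun ω => X j ω + ∑ i ∈ s, X i ω) := by
          funext ω
          rw [Finset.sum_insert hj]
        rw [e, distOf_add_of_indep μ (hmeas j) hSmeas hIndep, hXj]
      have hT := tensor (bern_good hpj0 hpj1) hGood
      rw [Finset.sum_insert hj, Finset.sum_insert hj, hdist]
      constructor
      · exact ⟨2 + m, hT.1⟩
      · calc relEnt (convP (bern (p j)) (distOf μ (fun ω => ∑ i ∈ s, X i ω)))
              (poissonPMF (p j + ∑ i ∈ s, p i))
            ≤ relEnt (bern (p j)) (poissonPMF (p j))
              + relEnt (distOf μ (fun ω => ∑ i ∈ s, X i ω)) (poissonPMF (∑ i ∈ s, p i)) :=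
              hT.2
          _ ≤ p j ^ 2 + ∑ i ∈ s, p i ^ 2 := add_le_add (bern_relEnt hpj0 hpj1) hEnt

/-- Inequality (3) -/
theorem poisson_approx_relEnt_indep {Ω : Type*} [MeasurableSpace Ω]
    (μ : Measure Ω) [IsProbabilityMeasure μ]
    (n : ℕ) (X : Fin n → Ω → ℕ)
    (hmeas : ∀ i, Measurable (X i))
    (hbin : ∀ i ω, X i ω ≤ 1)
    (hindep : iIndepFun X μ)
    (p : Fin n → ℝ) (hp : ∀ i, ∫ ω, (X i ω : ℝ) ∂μ = p i)
    (lam : ℝ) (hlam : ∑ i, p i = lam) :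
    relEnt (distOf μ (fun ω => ∑ i, X i ω)) (poissonPMF lam) ≤ ∑ i, (p i) ^ 2 := by
  have := (main_aux μ n X hmeas hbin hindep p hp Finset.univ).2
  rw [hlam] at this
  exact this
end

section
/- For every p ∈ [0,1], the relative entropy between the Bernoulli(p) distribution and the Poisson(p) distribution satisfies D(Bern(p) ‖ Po(p)) = (1−p) log((1−p)/e^{−p}) + p log(p/(p e^{−p})) ≤ p². -/
open MeasureTheory ProbabilityTheory Real Filter

/-- `D(Bern(p) ‖ Po(p)) = (1-p) log((1-p)/e^{-p}) + p log(p/(p e^{-p})) ≤ p²` for `p ∈ [0,1]`. -/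
theorem relEnt_bernoulli_poisson (p : ℝ) (hp0 : 0 ≤ p) (hp1 : p ≤ 1) :
    relEnt (fun k => if k = 0 then 1 - p else if k = 1 then p else 0) (poissonPMF p) =
      (1 - p) * Real.log ((1 - p) / Real.exp (-p)) +
        p * Real.log (p / (p * Real.exp (-p))) ∧
    (1 - p) * Real.log ((1 - p) / Real.exp (-p)) +
        p * Real.log (p / (p * Real.exp (-p))) ≤ p ^ 2 := by
  constructor
  · rw [relEnt]
    rw [tsum_eq_sum (s := ({0, 1} : Finset ℕ)) (by
      intro k hk
      simp only [Finset.mem_insert, Finset.mem_singleton, not_or] at hk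
      simp [hk.1, hk.2])]
    simp [_root_.poissonPMF, Nat.factorial, mul_comm]
  · rcases eq_or_lt_of_le hp0 with h0 | h0
    · simp [← h0]
    have h2 : p / (p * Real.exp (-p)) = Real.exp p := by
      rw [div_mul_eq_div_div, div_self h0.ne', one_div, ← Real.exp_neg, neg_neg]
    rw [h2, Real.log_exp]
    have : (1 - p) * Real.log ((1 - p) / Real.exp (-p)) ≤ 0 := by
      rcases eq_or_lt_of_le hp1 with h1 | h1
      · simp [← h1]
      have hpos : 0 < 1 - p := by linarith
      rw [Real.log_div hpos.ne' (Real.exp_pos _).ne', Real.log_exp]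
      have hlog : Real.log (1 - p) ≤ (1 - p) - 1 := Real.log_le_sub_one_of_pos hpos
      nlinarith
    nlinarith
end

section
/- Let λ > 0, ε > 0, and let S_n be the sum of n i.i.d. Bernoulli(λ/n) random variables, where n ≥ λ/ε and n > λ. Then ‖P_{S_n} − Po(λ)‖_TV ≤ (2 + ε) λ / n. -/
open MeasureTheory ProbabilityTheory Real Filter

set_option maxHeartbeats 1000000

namespace SteinAux

lemma q_nonneg (lam : ℝ) (hl : 0 < lam) (k : ℕ) : 0 ≤ _root_.poissonPMF lam k := by
  unfold _root_.poissonPMF; positivity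

lemma q_summable (lam : ℝ) : Summable (_root_.poissonPMF lam) := by
  have h := (Real.summable_pow_div_factorial lam).mul_left (Real.exp (-lam))
  refine h.congr fun k => ?_
  simp [_root_.poissonPMF, mul_div_assoc]

lemma q_tsum (lam : ℝ) : ∑' k, _root_.poissonPMF lam k = 1 := by
  have h1 : ∑' k : ℕ, lam ^ k / (Nat.factorial k : ℝ) = Real.exp lam := by
    rw [Real.exp_eq_exp_ℝ, NormedSpace.exp_eq_tsum_div]
  have h2 : ∑' k, _root_.poissonPMF lam k
      = Real.exp (-lam) * ∑' k : ℕ, lam ^ k / (Nat.factorial k : ℝ) := by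
    rw [← tsum_mul_left]
    refine tsum_congr fun k => ?_
    simp [_root_.poissonPMF, mul_div_assoc]
  rw [h2, h1, ← Real.exp_add]
  simp

lemma q_rec (lam : ℝ) (k : ℕ) :
    lam * _root_.poissonPMF lam k = ((k:ℝ) + 1) * _root_.poissonPMF lam (k+1) := by
  unfold _root_.poissonPMF
  have h1 : (Nat.factorial (k+1) : ℝ) = ((k:ℝ)+1) * (Nat.factorial k : ℝ) := by
    push_cast [Nat.factorial_succ]; ring
  have h2 : (Nat.factorial k : ℝ) ≠ 0 := Nat.cast_ne_zero.mpr (Nat.factorial_ne_zero k)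
  have h3 : ((k:ℝ)+1) ≠ 0 := by positivity
  rw [h1]
  field_simp
  ring

/-- partial sum of the Poisson pmf: F j = Q({0,...,j}) -/
noncomputable def F (lam : ℝ) (j : ℕ) : ℝ := ∑ k ∈ Finset.range (j+1), _root_.poissonPMF lam k

/-- tail of the Poisson pmf: T j = Q({j, j+1, ...}) -/
noncomputable def T (lam : ℝ) (j : ℕ) : ℝ := ∑' k, _root_.poissonPMF lam (k + j)

lemma F_nonneg (lam : ℝ) (hl : 0 < lam) (j : ℕ) : 0 ≤ F lam j :=
  Finset.sum_nonneg fun k _ => q_nonneg lam hl k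

lemma T_nonneg (lam : ℝ) (hl : 0 < lam) (j : ℕ) : 0 ≤ T lam j :=
  tsum_nonneg fun k => q_nonneg lam hl _

lemma F_add_T (lam : ℝ) (j : ℕ) : F lam j + T lam (j+1) = 1 := by
  have h := Summable.sum_add_tsum_nat_add (f := _root_.poissonPMF lam) (j+1) (q_summable lam)
  rw [q_tsum lam] at h
  simpa [F, T] using h

/-- Key inequality 1: `λ F j ≤ (j+1) F (j+1)` -/
lemma K1 (lam : ℝ) (hl : 0 < lam) (j : ℕ) :
    lam * F lam j ≤ ((j:ℝ)+1) * F lam (j+1) := by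
  have h1 : lam * F lam j = ∑ k ∈ Finset.range (j+1), ((k:ℝ)+1) * _root_.poissonPMF lam (k+1) := by
    rw [F, Finset.mul_sum]
    exact Finset.sum_congr rfl fun k _ => q_rec lam k
  have h2 : ∑ k ∈ Finset.range (j+1), ((k:ℝ)+1) * _root_.poissonPMF lam (k+1)
      ≤ ∑ k ∈ Finset.range (j+1), ((j:ℝ)+1) * _root_.poissonPMF lam (k+1) := by
    refine Finset.sum_le_sum fun k hk => ?_
    have hkj : (k:ℝ) + 1 ≤ (j:ℝ) + 1 := by
      have := Nat.lt_succ_iff.mp (Finset.mem_range.mp hk)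
      exact_mod_cast Nat.add_le_add_right this 1
    exact mul_le_mul_of_nonneg_right hkj (q_nonneg lam hl _)
  have h3 : ∑ k ∈ Finset.range (j+1), ((j:ℝ)+1) * _root_.poissonPMF lam (k+1)
      ≤ ((j:ℝ)+1) * F lam (j+1) := by
    rw [← Finset.mul_sum]
    refine mul_le_mul_of_nonneg_left ?_ (by positivity)
    have h4 : F lam (j+1) = (∑ k ∈ Finset.range (j+1), _root_.poissonPMF lam (k+1))
        + _root_.poissonPMF lam 0 := by
      rw [F, Finset.sum_range_succ']
    rw [h4]
    have := q_nonneg lam hl 0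
    linarith
  linarith

/-- Key inequality 2: `(j+1) T (j+2) ≤ λ T (j+1)` -/
lemma K2 (lam : ℝ) (hl : 0 < lam) (j : ℕ) :
    ((j:ℝ)+1) * T lam (j+2) ≤ lam * T lam (j+1) := by
  have hs1 : Summable (fun k => _root_.poissonPMF lam (k + (j+1))) :=
    (summable_nat_add_iff (j+1)).mpr (q_summable lam)
  have hs2 : Summable (fun k => _root_.poissonPMF lam (k + (j+2))) :=
    (summable_nat_add_iff (j+2)).mpr (q_summable lam)
  have h1 : lam * T lam (j+1) = ∑' k, lam * _root_.poissonPMF lam (k + (j+1)) := by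
    rw [T, tsum_mul_left]
  have h2 : ((j:ℝ)+1) * T lam (j+2) = ∑' k, ((j:ℝ)+1) * _root_.poissonPMF lam (k + (j+2)) := by
    rw [T, tsum_mul_left]
  rw [h1, h2]
  refine Summable.tsum_le_tsum (fun k => ?_) (hs2.mul_left _) (hs1.mul_left _)
  have h3 : lam * _root_.poissonPMF lam (k + (j+1))
      = ((k:ℝ) + (j:ℝ) + 2) * _root_.poissonPMF lam (k + (j+2)) := by
    have := q_rec lam (k + (j+1))
    have he : k + (j+1) + 1 = k + (j+2) := by omega
    rw [he] at this
    rw [this]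
    push_cast
    ring_nf
  rw [h3]
  refine mul_le_mul_of_nonneg_right ?_ (q_nonneg lam hl _)
  have : (0:ℝ) ≤ (k:ℝ) + 1 := by positivity
  linarith


/-- the solution of the Stein equation for the singleton set {i} (with g1 i 0 = 0). -/
noncomputable def g1 (lam : ℝ) (i : ℕ) : ℕ → ℝ
  | 0 => 0
  | (j+1) => (Nat.factorial j : ℝ) / lam^(j+1) * (lam^i / (Nat.factorial i : ℝ)) *
      ((if i ≤ j then (1:ℝ) else 0) - F lam j)

lemma exp_mul_q (lam : ℝ) (k : ℕ) :
    Real.exp lam * _root_.poissonPMF lam k = lam ^ k / (Nat.factorial k : ℝ) := by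
  unfold _root_.poissonPMF
  rw [← mul_div_assoc, ← mul_assoc, ← Real.exp_add]
  simp

/-- Stein equation for g1. -/
lemma stein1 (lam : ℝ) (hl : 0 < lam) (i j : ℕ) :
    lam * g1 lam i (j+1) - (j:ℝ) * g1 lam i j
      = (if j = i then (1:ℝ) else 0) - _root_.poissonPMF lam i := by
  have hci : (Nat.factorial i : ℝ) ≠ 0 := Nat.cast_ne_zero.mpr (Nat.factorial_ne_zero i)
  have hl0 : lam ≠ 0 := ne_of_gt hl
  have hqi : _root_.poissonPMF lam i = Real.exp (-lam) * (lam ^ i / (Nat.factorial i : ℝ)) := by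
    unfold _root_.poissonPMF; ring
  match j with
  | 0 =>
    simp only [g1, Nat.factorial_zero, Nat.cast_zero, zero_mul, sub_zero, pow_one, Nat.cast_one]
    have hF0 : F lam 0 = Real.exp (-lam) := by
      simp [F, _root_.poissonPMF]
    rw [hF0]
    rcases Nat.eq_zero_or_pos i with hi | hi
    · subst hi
      simp only [le_refl, if_true, Nat.le_zero, if_true]
      rw [hqi]
      field_simp
      simp
    · have h1 : ¬ (i ≤ 0) := by omega
      have h2 : ¬ (0 = i) := by omega
      simp only [h1, if_false, h2, if_false]
      rw [hqi]
      field_simp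
      ring
  | (j+1) =>
    have hfac : (Nat.factorial (j+1) : ℝ) = ((j:ℝ)+1) * (Nat.factorial j : ℝ) := by
      push_cast [Nat.factorial_succ]; ring
    have hFsucc : F lam (j+1) = F lam j + _root_.poissonPMF lam (j+1) := by
      simp [F, Finset.sum_range_succ]
    have hq1 : _root_.poissonPMF lam (j+1)
        = Real.exp (-lam) * (lam^(j+1) / (Nat.factorial (j+1) : ℝ)) := by
      unfold _root_.poissonPMF; ring
    have hcj1 : (Nat.factorial (j+1) : ℝ) ≠ 0 := Nat.cast_ne_zero.mpr (Nat.factorial_ne_zero _)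
    simp only [g1]
    rw [hFsucc, hq1, hqi, hfac]
    rcases Nat.lt_trichotomy i (j+1) with hi | hi | hi
    · have h1 : i ≤ j+1 := by omega
      have h2 : i ≤ j := by omega
      have h3 : ¬ (j+1 = i) := by omega
      simp only [h1, if_true, h2, if_true, h3, if_false]
      field_simp
      push_cast
      ring
    · subst hi
      have h1 : j+1 ≤ j+1 := le_refl _
      have h2 : ¬ (j+1 ≤ j) := by omega
      simp only [h1, if_true, h2, if_false, if_pos rfl]
      rw [hfac]
      field_simp
      push_cast
      ring
    · have h1 : ¬ (i ≤ j+1) := by omega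
      have h2 : ¬ (i ≤ j) := by omega
      have h3 : ¬ (j+1 = i) := by omega
      simp only [h1, if_false, h2, if_false, h3, if_false]
      field_simp
      push_cast
      ring

/-- One-sided increment bound for g1. -/
lemma delta1 (lam : ℝ) (hl : 0 < lam) (i j : ℕ) :
    g1 lam i (j+2) - g1 lam i (j+1) ≤ if i = j+1 then 1/lam else 0 := by
  have hl0 : lam ≠ 0 := ne_of_gt hl
  have hfi : (Nat.factorial i : ℝ) ≠ 0 := Nat.cast_ne_zero.mpr (Nat.factorial_ne_zero i)
  have hfj : (0:ℝ) < (Nat.factorial j : ℝ) := by exact_mod_cast Nat.factorial_pos j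
  have hfac : (Nat.factorial (j+1) : ℝ) = ((j:ℝ)+1) * (Nat.factorial j : ℝ) := by
    push_cast [Nat.factorial_succ]; ring
  have hTj1 : (1:ℝ) - F lam j = T lam (j+1) := by
    have := F_add_T lam j; linarith
  have hTj2 : (1:ℝ) - F lam (j+1) = T lam (j+2) := by
    have := F_add_T lam (j+1); linarith
  have hj1 : (0:ℝ) < (j:ℝ)+1 := by positivity
  have hc : (0:ℝ) < (Nat.factorial j : ℝ) * (lam^i / (Nat.factorial i : ℝ)) / lam^(j+2) := by
    positivity
  simp only [g1]
  rcases Nat.lt_trichotomy i (j+1) with hi | hi | hi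
  · -- i ≤ j : both indicators are 1, difference ≤ 0 by K2
    have h1 : i ≤ j := by omega
    have h2 : i ≤ j+1 := by omega
    have h3 : ¬ (i = j+1) := by omega
    simp only [h1, if_true, h2, if_true, h3, if_false]
    have key : (Nat.factorial (j+1) : ℝ) / lam^(j+2) * (lam^i / (Nat.factorial i : ℝ)) * (1 - F lam (j+1))
        - (Nat.factorial j : ℝ) / lam^(j+1) * (lam^i / (Nat.factorial i : ℝ)) * (1 - F lam j)
        = ((Nat.factorial j : ℝ) * (lam^i / (Nat.factorial i : ℝ)) / lam^(j+2))
          * ((((j:ℝ)+1) * T lam (j+2)) - lam * T lam (j+1)) := by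
      rw [hTj1, hTj2, hfac]
      field_simp
      ring
    rw [key]
    exact mul_nonpos_of_nonneg_of_nonpos (le_of_lt hc) (by linarith [K2 lam hl j])
  · -- i = j+1 : increment is T(j+2)/λ + F j/(j+1) ≤ 1/λ by K1
    subst hi
    have h1 : ¬ (j+1 ≤ j) := by omega
    simp only [le_refl, if_true, h1, if_false, if_pos rfl]
    have key : (Nat.factorial (j+1) : ℝ) / lam^(j+2) * (lam^(j+1) / (Nat.factorial (j+1) : ℝ)) * (1 - F lam (j+1))
        - (Nat.factorial j : ℝ) / lam^(j+1) * (lam^(j+1) / (Nat.factorial (j+1) : ℝ)) * (0 - F lam j)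
        = (1/lam) * T lam (j+2) + (1/((j:ℝ)+1)) * F lam j := by
      rw [hTj2, hfac]
      field_simp
      ring
    rw [key]
    have h5 : (1/((j:ℝ)+1)) * F lam j ≤ (1/lam) * F lam (j+1) := by
      rw [div_mul_eq_mul_div, div_mul_eq_mul_div, one_mul, one_mul,
        div_le_div_iff₀ hj1 hl]
      have := K1 lam hl j
      linarith
    have h6 : (1/lam) * T lam (j+2) + (1/lam) * F lam (j+1) = 1/lam := by
      have := F_add_T lam (j+1)
      field_simp
      linarith
    linarith
  · -- i ≥ j+2 : both indicators 0, difference ≤ 0 by K1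
    have h1 : ¬ (i ≤ j) := by omega
    have h2 : ¬ (i ≤ j+1) := by omega
    have h3 : ¬ (i = j+1) := by omega
    simp only [h1, if_false, h2, if_false, h3, if_false]
    have key : (Nat.factorial (j+1) : ℝ) / lam^(j+2) * (lam^i / (Nat.factorial i : ℝ)) * (0 - F lam (j+1))
        - (Nat.factorial j : ℝ) / lam^(j+1) * (lam^i / (Nat.factorial i : ℝ)) * (0 - F lam j)
        = ((Nat.factorial j : ℝ) * (lam^i / (Nat.factorial i : ℝ)) / lam^(j+2))
          * (lam * F lam j - (((j:ℝ)+1) * F lam (j+1))) := by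
      rw [hfac]
      field_simp
      ring
    rw [key]
    exact mul_nonpos_of_nonneg_of_nonpos (le_of_lt hc) (by linarith [K1 lam hl j])


/-- Stein solution for a finite set A -/
noncomputable def gA (lam : ℝ) (A : Finset ℕ) (j : ℕ) : ℝ := ∑ i ∈ A, g1 lam i j

lemma steinA (lam : ℝ) (hl : 0 < lam) (A : Finset ℕ) (j : ℕ) :
    lam * gA lam A (j+1) - (j:ℝ) * gA lam A j
      = (if j ∈ A then (1:ℝ) else 0) - ∑ i ∈ A, _root_.poissonPMF lam i := by
  unfold gA
  rw [Finset.mul_sum, Finset.mul_sum, ← Finset.sum_sub_distrib]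
  rw [Finset.sum_congr rfl fun i _ => stein1 lam hl i j]
  rw [Finset.sum_sub_distrib, Finset.sum_ite_eq A j (fun _ => (1:ℝ))]

lemma deltaA (lam : ℝ) (hl : 0 < lam) (A : Finset ℕ) (j : ℕ) :
    gA lam A (j+2) - gA lam A (j+1) ≤ 1/lam := by
  unfold gA
  rw [← Finset.sum_sub_distrib]
  calc ∑ i ∈ A, (g1 lam i (j+2) - g1 lam i (j+1))
      ≤ ∑ i ∈ A, (if i = j+1 then 1/lam else 0) :=
        Finset.sum_le_sum fun i _ => delta1 lam hl i j
    _ = if j+1 ∈ A then 1/lam else 0 := Finset.sum_ite_eq' A (j+1) (fun _ => (1/lam:ℝ))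
    _ ≤ 1/lam := by
        split
        · exact le_refl _
        · positivity


end SteinAux

section ProbAux
variable {Ω : Type*} [MeasurableSpace Ω] (μ : Measure Ω) [IsProbabilityMeasure μ]

lemma rep_comp (Y : Ω → ℕ) (m : ℕ) (hb : ∀ ω, Y ω ≤ m) (f : ℕ → ℝ) :
    (fun ω => f (Y ω))
      = fun ω => ∑ k ∈ Finset.range (m+1), Set.indicator {ω' | Y ω' = k} (fun _ => f k) ω := by
  funext ω
  have h1 : ∀ k, Set.indicator {ω' | Y ω' = k} (fun _ => f k) ω
      = if Y ω = k then f k else 0 := by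
    intro k
    simp [Set.indicator_apply, Set.mem_setOf_eq]
  simp_rw [h1]
  rw [Finset.sum_ite_eq (Finset.range (m+1)) (Y ω) f]
  rw [if_pos (Finset.mem_range.mpr (Nat.lt_succ_of_le (hb ω)))]

lemma integrable_comp (Y : Ω → ℕ) (hY : Measurable Y) (m : ℕ) (hb : ∀ ω, Y ω ≤ m)
    (f : ℕ → ℝ) : Integrable (fun ω => f (Y ω)) μ := by
  rw [rep_comp Y m hb f]
  refine integrable_finset_sum _ fun k _ => ?_
  exact (integrable_const (f k)).indicator (hY (measurableSet_singleton k))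

lemma integral_comp (Y : Ω → ℕ) (hY : Measurable Y) (m : ℕ) (hb : ∀ ω, Y ω ≤ m)
    (f : ℕ → ℝ) :
    ∫ ω, f (Y ω) ∂μ = ∑ k ∈ Finset.range (m+1), f k * (μ {ω | Y ω = k}).toReal := by
  rw [rep_comp Y m hb f]
  rw [integral_finset_sum _ (fun k (_ : k ∈ Finset.range (m+1)) =>
    ((integrable_const (f k)).indicator (hY (measurableSet_singleton k)) :
      Integrable (Set.indicator {ω' | Y ω' = k} (fun _ => f k)) μ))]
  refine Finset.sum_congr rfl fun k _ => ?_
  have hset : {ω' | Y ω' = k} = Y ⁻¹' {k} := rfl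
  rw [hset, integral_indicator_const (f k) (hY (measurableSet_singleton k)), smul_eq_mul,
    mul_comm]
  rfl

lemma sum_dist_one (Y : Ω → ℕ) (hY : Measurable Y) (m : ℕ) (hb : ∀ ω, Y ω ≤ m) :
    ∑ k ∈ Finset.range (m+1), (μ {ω | Y ω = k}).toReal = 1 := by
  have h := integral_comp μ Y hY m hb (fun _ => (1:ℝ))
  simp only [one_mul] at h
  rw [← h]
  simp


/-- Integral of a product of functions of two independent bounded ℕ-valued variables. -/
lemma indep_integral_mul (U V : Ω → ℕ) (hU : Measurable U) (hV : Measurable V)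
    (hUV : IndepFun U V μ) (mU mV : ℕ) (hbU : ∀ ω, U ω ≤ mU) (hbV : ∀ ω, V ω ≤ mV)
    (φ ψ : ℕ → ℝ) :
    ∫ ω, φ (U ω) * ψ (V ω) ∂μ = (∫ ω, φ (U ω) ∂μ) * (∫ ω, ψ (V ω) ∂μ) := by
  have h1 : IndepFun (fun ω => φ (U ω)) (fun ω => ψ (V ω)) μ :=
    hUV.comp measurable_from_nat measurable_from_nat
  exact h1.integral_fun_mul_eq_mul_integral (integrable_comp μ U hU mU hbU φ).aestronglyMeasurable
    (integrable_comp μ V hV mV hbV ψ).aestronglyMeasurable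

/-- Core Stein-Chen bound: for any finite set A,
`P(S ∈ A) - Q(A) ≤ λ/n` for the sum S of n iid Bernoulli(λ/n). -/
theorem core (lam : ℝ) (hlam : 0 < lam) (n : ℕ) (hn : 0 < n) (X : Fin n → Ω → ℕ)
    (hmeas : ∀ i, Measurable (X i)) (hbin : ∀ i ω, X i ω ≤ 1)
    (hindep : iIndepFun X μ)
    (hid : ∀ i, (μ {ω | X i ω = 1}).toReal = lam / n)
    (A : Finset ℕ) :
    ∑ k ∈ A, ((μ {ω | ∑ i, X i ω = k}).toReal - _root_.poissonPMF lam k) ≤ lam / n := by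
  classical
  have hn0 : (0:ℝ) < n := by exact_mod_cast hn
  set p : ℝ := lam / n with hpdef
  have hp0 : 0 ≤ p := by positivity
  have hnp : (n:ℝ) * p = lam := by rw [hpdef]; field_simp
  set S : Ω → ℕ := fun ω => ∑ i, X i ω with hSdef
  have hS : Measurable S := Finset.measurable_sum _ (fun i _ => hmeas i)
  have hSle : ∀ ω, S ω ≤ n := by
    intro ω
    calc S ω ≤ ∑ _i : Fin n, 1 := Finset.sum_le_sum (fun i _ => hbin i ω)
    _ = n := by simp
  set T : Fin n → Ω → ℕ := fun i ω => ∑ j ∈ Finset.univ.erase i, X j ω with hTdef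
  have hTmeas : ∀ i, Measurable (T i) := fun i => Finset.measurable_sum _ (fun j _ => hmeas j)
  have hTle : ∀ i ω, T i ω ≤ n := by
    intro i ω
    calc T i ω ≤ ∑ _j ∈ Finset.univ.erase i, 1 := Finset.sum_le_sum (fun j _ => hbin j ω)
    _ ≤ n := by
        rw [Finset.sum_const, smul_eq_mul, mul_one]
        calc (Finset.univ.erase i).card ≤ (Finset.univ : Finset (Fin n)).card :=
              Finset.card_le_card (Finset.erase_subset i Finset.univ)
        _ = n := by simp
  have hST : ∀ i ω, T i ω + X i ω = S ω := fun i ω => Finset.sum_erase_add _ _ (Finset.mem_univ i)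
  set q : ℕ → ℝ := _root_.poissonPMF lam with hqdef
  set g : ℕ → ℝ := SteinAux.gA lam A with hgdef
  set QA : ℝ := ∑ i ∈ A, q i with hQAdef
  set fA : ℕ → ℝ := fun k => if k ∈ A then (1:ℝ) else 0 with hfAdef
  set P : ℕ → ℝ := fun k => (μ {ω | S ω = k}).toReal with hPdef
  have hPnonneg : ∀ k, 0 ≤ P k := fun k => ENNReal.toReal_nonneg
  have hPz : ∀ k, n < k → P k = 0 := by
    intro k hk
    have hset : {ω | S ω = k} = ∅ := by
      ext ω
      simp only [Set.mem_setOf_eq, Set.mem_empty_iff_false, iff_false]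
      intro h
      have := hSle ω
      omega
    simp [hPdef, hset]
  -- step 1 : ∫ fA (S) = ∑_{k ∈ A} P k
  have key1 : ∫ ω, fA (S ω) ∂μ = ∑ k ∈ A, P k := by
    rw [integral_comp μ S hS n hSle fA]
    have e1 : ∀ k ∈ Finset.range (n+1), fA k * P k = if k ∈ A then P k else 0 := by
      intro k _
      rw [hfAdef]
      by_cases h : k ∈ A <;> simp [h]
    rw [Finset.sum_congr rfl e1, ← Finset.sum_filter]
    refine Finset.sum_subset (fun k hk => (Finset.mem_filter.mp hk).2) ?_
    intro k hkA hkf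
    have hnk : n < k := by
      by_contra h
      exact hkf (Finset.mem_filter.mpr ⟨Finset.mem_range.mpr (by omega), hkA⟩)
    exact hPz k hnk
  -- step 2 : Stein representation
  have hstein : ∀ s : ℕ, fA s - QA = lam * g (s+1) - (s:ℝ) * g s :=
    fun s => (SteinAux.steinA lam hlam A s).symm
  have key2 : ∑ k ∈ A, (P k - q k)
      = lam * (∫ ω, g (S ω + 1) ∂μ) - ∫ ω, ((S ω : ℝ) * g (S ω)) ∂μ := by
    have int1 : Integrable (fun ω => fA (S ω)) μ := integrable_comp μ S hS n hSle fA
    have int2 : Integrable (fun ω => (QA:ℝ)) μ := integrable_const QA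
    have e2 : ∑ k ∈ A, (P k - q k) = ∫ ω, (fA (S ω) - QA) ∂μ := by
      rw [integral_sub int1 int2, key1, integral_const]
      simp [Finset.sum_sub_distrib, hQAdef]
    rw [e2]
    have e3 : (fun ω => fA (S ω) - QA)
        = fun ω => (fun s : ℕ => lam * g (s+1) - (s:ℝ) * g s) (S ω) :=
      funext fun ω => hstein (S ω)
    rw [e3]
    have int3 : Integrable (fun ω => (fun s : ℕ => lam * g (s+1)) (S ω)) μ :=
      integrable_comp μ S hS n hSle (fun s : ℕ => lam * g (s+1))
    have int4 : Integrable (fun ω => (fun s : ℕ => (s:ℝ) * g s) (S ω)) μ :=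
      integrable_comp μ S hS n hSle (fun s : ℕ => (s:ℝ) * g s)
    have e4 : (fun ω => (fun s : ℕ => lam * g (s+1) - (s:ℝ) * g s) (S ω))
        = fun ω => (fun s : ℕ => lam * g (s+1)) (S ω) - (fun s : ℕ => (s:ℝ) * g s) (S ω) := rfl
    rw [e4, integral_sub int3 int4]
    congr 1
    · rw [← integral_const_mul]
  -- step 3 : ∫ S g(S) = ∑_i p ∫ g(T i + 1)
  have hXg : ∀ i, (fun ω => ((X i ω : ℕ) : ℝ) * g (S ω))
      = fun ω => ((X i ω : ℕ) : ℝ) * g (T i ω + 1) := by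
    intro i
    funext ω
    rcases Nat.le_one_iff_eq_zero_or_eq_one.mp (hbin i ω) with h | h
    · rw [h]; simp
    · have := hST i ω
      rw [h] at this ⊢
      rw [← this]
  have hindepTX : ∀ i, IndepFun (X i) (T i) μ := by
    intro i
    have h := (hindep.indepFun_finsetSum_of_notMem hmeas
      (Finset.notMem_erase i Finset.univ)).symm
    have e : (∑ j ∈ Finset.univ.erase i, X j) = T i := by
      funext ω
      rw [hTdef]
      simp [Finset.sum_apply]
    rwa [e] at h
  have hEX : ∀ i, ∫ ω, ((X i ω : ℕ) : ℝ) ∂μ = p := by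
    intro i
    rw [integral_comp μ (X i) (hmeas i) 1 (hbin i) (fun k => (k:ℝ))]
    rw [Finset.sum_range_succ, Finset.sum_range_succ, Finset.sum_range_zero]
    rw [hid i]
    norm_num
  have key3 : ∫ ω, ((S ω : ℝ) * g (S ω)) ∂μ = ∑ i, p * ∫ ω, g (T i ω + 1) ∂μ := by
    have e5 : (fun ω => ((S ω : ℝ) * g (S ω)))
        = fun ω => ∑ i, ((X i ω : ℕ) : ℝ) * g (S ω) := by
      funext ω
      rw [hSdef]
      push_cast
      rw [Finset.sum_mul]
    rw [e5]
    have int5 : ∀ i ∈ (Finset.univ : Finset (Fin n)),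
        Integrable (fun ω => ((X i ω : ℕ) : ℝ) * g (S ω)) μ := by
      intro i _
      rw [hXg i]
      have e6 : (fun ω => ((X i ω : ℕ) : ℝ) * g (T i ω + 1))
          = fun ω => (fun m => ((m % 2 : ℕ) : ℝ) * g (m / 2 + 1)) (X i ω + 2 * T i ω) := by
        funext ω
        have hx := hbin i ω
        have hm : (X i ω + 2 * T i ω) % 2 = X i ω := by omega
        have hd : (X i ω + 2 * T i ω) / 2 = T i ω := by omega
        simp only [hm, hd]
      rw [e6]
      exact integrable_comp μ (fun ω => X i ω + 2 * T i ω)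
        (((hmeas i).add ((hTmeas i).const_mul 2))) (2*n+1)
        (fun ω => by have h1 := hbin i ω; have h2 := hTle i ω; show X i ω + 2 * T i ω ≤ 2*n+1; omega)
        (fun m : ℕ => ((m % 2 : ℕ) : ℝ) * g (m / 2 + 1))
    rw [integral_finset_sum _ int5]
    refine Finset.sum_congr rfl fun i _ => ?_
    rw [hXg i]
    rw [indep_integral_mul μ (X i) (T i) (hmeas i) (hTmeas i) (hindepTX i) 1 n
      (hbin i) (hTle i) (fun k => (k:ℝ)) (fun t => g (t + 1))]
    rw [hEX i]
  -- step 4 : per-term bound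
  have key4 : ∀ i, ∫ ω, g (S ω + 1) ∂μ - ∫ ω, g (T i ω + 1) ∂μ ≤ p * (1/lam) := by
    intro i
    have int6 : Integrable (fun ω => (fun s : ℕ => g (s+1)) (S ω)) μ :=
      integrable_comp μ S hS n hSle (fun s : ℕ => g (s+1))
    have int7 : Integrable (fun ω => (fun t : ℕ => g (t+1)) (T i ω)) μ :=
      integrable_comp μ (T i) (hTmeas i) n (hTle i) (fun t : ℕ => g (t+1))
    rw [← integral_sub int6 int7]
    have e7 : (fun ω => (fun s : ℕ => g (s+1)) (S ω) - (fun t : ℕ => g (t+1)) (T i ω))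
        = fun ω => ((X i ω : ℕ) : ℝ) * (fun t : ℕ => g (t+2) - g (t+1)) (T i ω) := by
      funext ω
      rcases Nat.le_one_iff_eq_zero_or_eq_one.mp (hbin i ω) with h | h
      · have hts := hST i ω
        rw [h, add_zero] at hts
        simp only [h, Nat.cast_zero, zero_mul, hts, sub_self]
      · have hts := hST i ω
        rw [h] at hts
        simp only [← hts, h, Nat.cast_one, one_mul]
    rw [e7]
    rw [indep_integral_mul μ (X i) (T i) (hmeas i) (hTmeas i) (hindepTX i) 1 n
      (hbin i) (hTle i) (fun k => (k:ℝ)) (fun t : ℕ => g (t+2) - g (t+1))]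
    rw [hEX i]
    refine mul_le_mul_of_nonneg_left ?_ hp0
    rw [integral_comp μ (T i) (hTmeas i) n (hTle i) (fun t : ℕ => g (t+2) - g (t+1))]
    calc ∑ k ∈ Finset.range (n+1), (g (k+2) - g (k+1)) * (μ {ω | T i ω = k}).toReal
        ≤ ∑ k ∈ Finset.range (n+1), (1/lam) * (μ {ω | T i ω = k}).toReal := by
          refine Finset.sum_le_sum fun k _ => ?_
          exact mul_le_mul_of_nonneg_right (SteinAux.deltaA lam hlam A k) ENNReal.toReal_nonneg
      _ = 1/lam := by
          rw [← Finset.mul_sum, sum_dist_one μ (T i) (hTmeas i) n (hTle i), mul_one]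
  -- assemble
  have final : ∑ k ∈ A, (P k - q k) ≤ (n:ℝ) * (p * (p * (1/lam))) := by
    rw [key2, key3]
    have e8 : lam * (∫ ω, g (S ω + 1) ∂μ) = ∑ _i : Fin n, p * ∫ ω, g (S ω + 1) ∂μ := by
      rw [Finset.sum_const, Finset.card_univ, Fintype.card_fin, nsmul_eq_mul, ← mul_assoc, hnp]
    rw [e8, ← Finset.sum_sub_distrib]
    have e9 : ∀ i ∈ (Finset.univ : Finset (Fin n)),
        p * (∫ ω, g (S ω + 1) ∂μ) - p * (∫ ω, g (T i ω + 1) ∂μ) ≤ p * (p * (1/lam)) := by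
      intro i _
      rw [← mul_sub]
      exact mul_le_mul_of_nonneg_left (key4 i) hp0
    calc ∑ i : Fin n, (p * (∫ ω, g (S ω + 1) ∂μ) - p * (∫ ω, g (T i ω + 1) ∂μ))
        ≤ ∑ _i : Fin n, p * (p * (1/lam)) := Finset.sum_le_sum e9
      _ = (n:ℝ) * (p * (p * (1/lam))) := by
          rw [Finset.sum_const, Finset.card_univ, Fintype.card_fin, nsmul_eq_mul]
  have harith : (n:ℝ) * (p * (p * (1/lam))) = p := by
    have hl0 : lam ≠ 0 := ne_of_gt hlam
    rw [hpdef]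
    field_simp
  rw [harith] at final
  exact final


end ProbAux

/-- **Example 1**: if `S_n` is the sum of `n` i.i.d. Bernoulli(λ/n) random variables with
`n ≥ λ/ε` and `n > λ`, then `‖P_{S_n} - Po(λ)‖_TV ≤ (2+ε) λ/n`. -/
theorem tv_poisson_approx_iid_bernoulli {Ω : Type*} [MeasurableSpace Ω]
    (μ : Measure Ω) [IsProbabilityMeasure μ]
    (lam ε : ℝ) (hlampos : 0 < lam) (hεpos : 0 < ε)
    (n : ℕ) (X : Fin n → Ω → ℕ)
    (hmeas : ∀ i, Measurable (X i))
    (hbin : ∀ i ω, X i ω ≤ 1)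
    (hindep : iIndepFun X μ)
    (hid : ∀ i, distOf μ (X i) 1 = lam / n)
    (hn1 : lam / ε ≤ (n : ℝ)) (hn2 : lam < (n : ℝ)) :
    tvDist (distOf μ (fun ω => ∑ i, X i ω)) (poissonPMF lam) ≤ (2 + ε) * lam / n := by
  classical
  have hn0 : (0:ℝ) < n := lt_trans hlampos hn2
  have hn : 0 < n := by exact_mod_cast hn0
  set S : Ω → ℕ := fun ω => ∑ i, X i ω with hSdef
  have hS : Measurable S := Finset.measurable_sum _ (fun i _ => hmeas i)
  have hSle : ∀ ω, S ω ≤ n := by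
    intro ω
    calc S ω ≤ ∑ _i : Fin n, 1 := Finset.sum_le_sum (fun i _ => hbin i ω)
    _ = n := by simp
  set P : ℕ → ℝ := distOf μ S with hPdef
  set q : ℕ → ℝ := _root_.poissonPMF lam with hqdef
  have hPk : ∀ k, P k = (μ {ω | S ω = k}).toReal := fun k => rfl
  have hq0 : ∀ k, 0 ≤ q k := SteinAux.q_nonneg lam hlampos
  have hP0 : ∀ k, 0 ≤ P k := fun k => ENNReal.toReal_nonneg
  have hPz : ∀ k ∉ Finset.range (n+1), P k = 0 := by
    intro k hk
    have hnk : n < k := by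
      simpa [Nat.lt_succ_iff] using hk
    have hset : {ω | S ω = k} = ∅ := by
      ext ω
      simp only [Set.mem_setOf_eq, Set.mem_empty_iff_false, iff_false]
      intro h
      have := hSle ω
      omega
    rw [hPk, hset]
    simp
  have hPsum : Summable P := summable_of_ne_finset_zero hPz
  have hqsum : Summable q := SteinAux.q_summable lam
  have hPtsum : ∑' k, P k = 1 := by
    rw [tsum_eq_sum hPz]
    exact sum_dist_one μ S hS n hSle
  have hqtsum : ∑' k, q k = 1 := SteinAux.q_tsum lam
  have habs : ∀ x : ℝ, |x| = 2 * max x 0 - x := by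
    intro x
    rcases le_total 0 x with h | h
    · rw [abs_of_nonneg h, max_eq_left h]; ring
    · rw [abs_of_nonpos h, max_eq_right h]; ring
  have hmsum : Summable (fun k => max (P k - q k) 0) := by
    refine Summable.of_nonneg_of_le (fun k => le_max_right _ _) (fun k => ?_) hPsum
    exact max_le (by linarith [hq0 k]) (hP0 k)
  have hsub : Summable (fun k => P k - q k) := hPsum.sub hqsum
  have htv : tvDist P q = 2 * ∑' k, max (P k - q k) 0 := by
    unfold tvDist
    rw [tsum_congr (fun k => habs (P k - q k))]
    rw [Summable.tsum_sub (hmsum.mul_left 2) hsub, tsum_mul_left, Summable.tsum_sub hPsum hqsum,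
      hPtsum, hqtsum]
    ring
  set A : Finset ℕ := (Finset.range (n+1)).filter (fun k => q k < P k) with hAdef
  have hmax : ∑' k, max (P k - q k) 0 = ∑ k ∈ A, (P k - q k) := by
    have hz : ∀ k ∉ Finset.range (n+1), max (P k - q k) 0 = 0 := by
      intro k hk
      rw [hPz k hk]
      rw [max_eq_right (by linarith [hq0 k])]
    rw [tsum_eq_sum hz, hAdef, Finset.sum_filter]
    refine Finset.sum_congr rfl fun k _ => ?_
    by_cases h : q k < P k
    · rw [if_pos h, max_eq_left (by linarith)]
    · rw [if_neg h, max_eq_right (by push_neg at h; linarith)]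
  have hcore := core μ lam hlampos n hn X hmeas hbin hindep (fun i => hid i) A
  have hAsum : ∑ k ∈ A, (P k - q k) ≤ lam / n := hcore
  have hfinal : tvDist P q ≤ 2 * (lam / n) := by
    rw [htv, hmax]
    linarith
  refine le_trans hfinal ?_
  have heps : 0 ≤ ε * lam / n := by positivity
  have : (2 + ε) * lam / n = 2 * (lam / n) + ε * lam / n := by ring
  linarith
end
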